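/- Inductive backpropagation claim: Let δ ∈ (0, 1/(16K²)) and let (y,z) ∈ [0,1]^{3n−4} be a KKT point of the polynomial p constructed from the truncated-linear program. For i ∈ {2,…,n}, let ε_i := (2Kδ)^{n−i}, and let f_i^π : ℝ^i → ℝ be the function computed by the gates i+1, …, n of the program perturbed by π ∈ ℝ^{n−2}, on inputs x₁, …, x_i (i.e., v_j = x_j for j ≤ i and v_m = trunc(Σ_{j<m} a_{mj} v_j + c_m + π_m) for m = i+1, …, n, with output v_n). Then there exist π ∈ ℝ^{n−2} with |π_i| ≤ 4K·(2Kδ)^{n+1−i} for each i ∈ {3,…,n}, and λ ∈ [0,1]^{n−2}, such that for every i ∈ {2,…,n}: (1) for every sign vector s ∈ {+1,−1}^{n−2} (with s·π the coordinate-wise product), f_i^{s·π} is differentiable on the box Π_{j≤i}[y_j − ε_i, y_j + ε_i] and its gradient is constant on that box; and (2) for every k ≤ i: ∂p_i/∂y_k(y,z) = δ^{n+1} · Σ_{s : s_j = 1 for all j ≤ i} (Π_{j=i+1}^n λ_{s_j·j}) · ∂f_i^{s·π}/∂x_k(y₁, …, y_i), where λ_{+j} := λ_j and λ_{−j} :=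 1 − λ_j. -/

import Mathlib

noncomputable section

/-- Truncation to the unit interval. -/
def trunc (z : ℝ) : ℝ := min 1 (max 0 z)

/-- Value `v_m` of variable `m` of the truncated-linear program with coefficients `a`, `c`,
perturbed by `π`, where variables with index `≤ i` are treated as inputs given by `x` and
`v_m = trunc(Σ_{1 ≤ j < m} a_{mj} v_j + c_m + π_m)` for the remaining variables. -/
def circVal (a : ℕ → ℕ → ℝ) (c π : ℕ → ℝ) (i : ℕ) (x : ℕ → ℝ) (m : ℕ) : ℝ :=
  if m ≤ i then x m
  else
    trunc ((∑ j ∈ (Finset.Ico 1 m).attach, a m j.1 * circVal a c π i x j.1) + c m + π m)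
termination_by m
decreasing_by exact (Finset.mem_Ico.mp j.2).2

/-- The function `f^π : ℝ² → ℝ` computed by the program perturbed by `π`
(inputs `v₁ = x₁`, `v₂ = x₂`, output `v_n`). -/
def progFun (a : ℕ → ℕ → ℝ) (c π : ℕ → ℝ) (n : ℕ) : ℝ × ℝ → ℝ :=
  fun x => circVal a c π 2 (fun j => if j ≤ 1 then x.1 else x.2) n

/-- The gradient of `f^π` at `w`, as a vector in `ℝ²`. -/
def progGrad (a : ℕ → ℕ → ℝ) (c π : ℕ → ℝ) (n : ℕ) (w : ℝ × ℝ) : ℝ × ℝ :=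
  (fderiv ℝ (progFun a c π n) w (1, 0), fderiv ℝ (progFun a c π n) w (0, 1))

/-- The `δ`-generalized circuit gradient of the program at `w`: the convex hull of the
gradients at `w` of the functions computed by all `δ`-perturbations of the program that are
differentiable at `w`. -/
def genGrad (a : ℕ → ℕ → ℝ) (c : ℕ → ℝ) (n : ℕ) (δ : ℝ) (w : ℝ × ℝ) : Set (ℝ × ℝ) :=
  convexHull ℝ {u | ∃ π : ℕ → ℝ, (∀ i, 3 ≤ i → i ≤ n → |π i| ≤ δ) ∧
    DifferentiableAt ℝ (progFun a c π n) w ∧ u = progGrad a c π n w}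

/-- The term `q_i` of the quadratic polynomial, implementing the `i`-th gate. -/
def qval (K : ℝ) (a : ℕ → ℕ → ℝ) (c : ℕ → ℝ) (i : ℕ) (y zp zm : ℕ → ℝ) : ℝ :=
  (y i + K * zp i - K * zm i - (∑ j ∈ Finset.Ico 1 i, a i j * y j) - c i) ^ 2
    + 2 * K ^ 2 * zp i * zm i + 2 * K * zp i * (1 - y i) + 2 * K * zm i * y i

/-- The quadratic polynomial `p(y,z) = δ^{n+1} y_n + Σ_{i=3}^n δ^i q_i(y,z)`. -/
def pval (n : ℕ) (K δ : ℝ) (a : ℕ → ℕ → ℝ) (c : ℕ → ℝ) (y zp zm : ℕ → ℝ) : ℝ :=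
  δ ^ (n + 1) * y n + ∑ i ∈ Finset.Icc 3 n, δ ^ i * qval K a c i y zp zm

/-- The partial derivative `∂p/∂y_k`. -/
def dpy (n : ℕ) (K δ : ℝ) (a : ℕ → ℕ → ℝ) (c : ℕ → ℝ) (k : ℕ) (y zp zm : ℕ → ℝ) : ℝ :=
  deriv (fun t => pval n K δ a c (Function.update y k t) zp zm) (y k)

/-- The partial derivative `∂p/∂z_k⁺`. -/
def dpzp (n : ℕ) (K δ : ℝ) (a : ℕ → ℕ → ℝ) (c : ℕ → ℝ) (k : ℕ) (y zp zm : ℕ → ℝ) : ℝ :=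
  deriv (fun t => pval n K δ a c y (Function.update zp k t) zm) (zp k)

/-- The partial derivative `∂p/∂z_k⁻`. -/
def dpzm (n : ℕ) (K δ : ℝ) (a : ℕ → ℕ → ℝ) (c : ℕ → ℝ) (k : ℕ) (y zp zm : ℕ → ℝ) : ℝ :=
  deriv (fun t => pval n K δ a c y zp (Function.update zm k t)) (zm k)

/-- `(y, z⁺, z⁻) ∈ [0,1]^{3n−4}` is a KKT point of the minimization of `p` over the box. -/
def IsKKT (n : ℕ) (K δ : ℝ) (a : ℕ → ℕ → ℝ) (c : ℕ → ℝ) (y zp zm : ℕ → ℝ) : Prop :=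
  (∀ i, 1 ≤ i → i ≤ n → y i ∈ Set.Icc (0 : ℝ) 1) ∧
  (∀ i, 3 ≤ i → i ≤ n → zp i ∈ Set.Icc (0 : ℝ) 1 ∧ zm i ∈ Set.Icc (0 : ℝ) 1) ∧
  (∀ i, 1 ≤ i → i ≤ n →
    (0 < y i → dpy n K δ a c i y zp zm ≤ 0) ∧ (y i < 1 → 0 ≤ dpy n K δ a c i y zp zm)) ∧
  (∀ i, 3 ≤ i → i ≤ n →
    ((0 < zp i → dpzp n K δ a c i y zp zm ≤ 0) ∧ (zp i < 1 → 0 ≤ dpzp n K δ a c i y zp zm)) ∧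
    ((0 < zm i → dpzm n K δ a c i y zp zm ≤ 0) ∧ (zm i < 1 → 0 ≤ dpzm n K δ a c i y zp zm)))

/-- The tail polynomial `p_i(y,z) = δ^{n+1} y_n + Σ_{ℓ=i+1}^n δ^ℓ q_ℓ(y,z)`. -/
def pival (n : ℕ) (K δ : ℝ) (a : ℕ → ℕ → ℝ) (c : ℕ → ℝ) (i : ℕ) (y zp zm : ℕ → ℝ) : ℝ :=
  δ ^ (n + 1) * y n + ∑ l ∈ Finset.Icc (i + 1) n, δ ^ l * qval K a c l y zp zm

/-- The partial derivative `∂p_i/∂y_k`. -/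
def dpiy (n : ℕ) (K δ : ℝ) (a : ℕ → ℕ → ℝ) (c : ℕ → ℝ) (i k : ℕ) (y zp zm : ℕ → ℝ) : ℝ :=
  deriv (fun t => pival n K δ a c i (Function.update y k t) zp zm) (y k)

/-- The coordinate-wise product `s · π` of a sign vector with a perturbation vector, where
the sign vector is encoded by the set `T` of indices carrying sign `+1`. -/
def signed (π : ℕ → ℝ) (T : Finset ℕ) : ℕ → ℝ :=
  fun j => if j ∈ T then π j else -π j

/-- The coordinate-wise product `s · π` for a sign vector that is `+1` on all indices
`j ≤ i`, and on indices `j > i` is `+1` exactly on `T`. -/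
def signedAbove (i : ℕ) (π : ℕ → ℝ) (T : Finset ℕ) : ℕ → ℝ :=
  fun j => if j ≤ i ∨ j ∈ T then π j else -π j

/-- The function `f_i^π : ℝ^i → ℝ` computed by gates `i+1, …, n` of the perturbed program,
on inputs `x₁, …, x_i` (coordinate `j : Fin i` of the argument is the input `x_{j+1}`). -/
def progFunFrom (a : ℕ → ℕ → ℝ) (c π : ℕ → ℝ) (i n : ℕ) : (Fin i → ℝ) → ℝ :=
  fun v =>
    circVal a c π i (fun m => if h : 1 ≤ m ∧ m ≤ i then v ⟨m - 1, by omega⟩ else 0) n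

set_option maxHeartbeats 2000000
open Finset

lemma circVal_le (a : ℕ → ℕ → ℝ) (c π : ℕ → ℝ) (i : ℕ) (x : ℕ → ℝ) (m : ℕ) (h : m ≤ i) :
    circVal a c π i x m = x m := by rw [circVal]; simp [h]

lemma circVal_gt (a : ℕ → ℕ → ℝ) (c π : ℕ → ℝ) (i : ℕ) (x : ℕ → ℝ) (m : ℕ) (h : ¬ m ≤ i) :
    circVal a c π i x m =
      trunc ((∑ j ∈ Finset.Ico 1 m, a m j * circVal a c π i x j) + c m + π m) := by
  rw [circVal]; simp only [h, if_false]
  rw [← Finset.sum_attach (Finset.Ico 1 m) (fun j => a m j * circVal a c π i x j)]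

lemma circVal_congr_x (a : ℕ → ℕ → ℝ) (c π : ℕ → ℝ) (i : ℕ) (x₁ x₂ : ℕ → ℝ)
    (hx : ∀ j, 1 ≤ j → j ≤ i → x₁ j = x₂ j) :
    ∀ m, 1 ≤ m → circVal a c π i x₁ m = circVal a c π i x₂ m := by
  intro m
  induction m using Nat.strong_induction_on with
  | _ m ih =>
    intro hm
    by_cases h : m ≤ i
    · rw [circVal_le _ _ _ _ _ _ h, circVal_le _ _ _ _ _ _ h]; exact hx m hm h
    · rw [circVal_gt _ _ _ _ _ _ h, circVal_gt _ _ _ _ _ _ h]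
      have : ∑ j ∈ Finset.Ico 1 m, a m j * circVal a c π i x₁ j
          = ∑ j ∈ Finset.Ico 1 m, a m j * circVal a c π i x₂ j :=
        Finset.sum_congr rfl fun j hj =>
          by rw [ih j (Finset.mem_Ico.mp hj).2 (Finset.mem_Ico.mp hj).1]
      rw [this]

lemma circVal_congr_pi (a : ℕ → ℕ → ℝ) (c : ℕ → ℝ) (π₁ π₂ : ℕ → ℝ) (i : ℕ) (x : ℕ → ℝ)
    (hπ : ∀ m, i < m → π₁ m = π₂ m) :
    ∀ m, circVal a c π₁ i x m = circVal a c π₂ i x m := by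
  intro m
  induction m using Nat.strong_induction_on with
  | _ m ih =>
    by_cases h : m ≤ i
    · rw [circVal_le _ _ _ _ _ _ h, circVal_le _ _ _ _ _ _ h]
    · rw [circVal_gt _ _ _ _ _ _ h, circVal_gt _ _ _ _ _ _ h, hπ m (by omega)]
      have : ∑ j ∈ Finset.Ico 1 m, a m j * circVal a c π₁ i x j
          = ∑ j ∈ Finset.Ico 1 m, a m j * circVal a c π₂ i x j :=
        Finset.sum_congr rfl fun j hj => by rw [ih j (Finset.mem_Ico.mp hj).2]
      rw [this]

/-- Absorb gate `i+1` into the inputs. -/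
lemma circVal_absorb (a : ℕ → ℕ → ℝ) (c π : ℕ → ℝ) (i : ℕ) (x : ℕ → ℝ) :
    ∀ m, circVal a c π i x m =
      circVal a c π (i + 1)
        (Function.update x (i + 1)
          (trunc ((∑ j ∈ Finset.Ico 1 (i + 1), a (i + 1) j * x j) + c (i + 1) + π (i + 1)))) m := by
  intro m
  induction m using Nat.strong_induction_on with
  | _ m ih =>
    rcases lt_trichotomy m (i+1) with h | h | h
    · rw [circVal_le _ _ _ _ _ _ (by omega), circVal_le _ _ _ _ _ _ (by omega),
        Function.update_of_ne (by omega)]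
    · subst h
      rw [circVal_gt _ _ _ _ _ _ (by omega), circVal_le _ _ _ _ _ _ le_rfl,
        Function.update_self]
      have : ∑ j ∈ Finset.Ico 1 (i+1), a (i+1) j * circVal a c π i x j
          = ∑ j ∈ Finset.Ico 1 (i+1), a (i+1) j * x j :=
        Finset.sum_congr rfl fun j hj =>
          by rw [circVal_le _ _ _ _ _ _ (by simp at hj; omega)]
      rw [this]
    · rw [circVal_gt _ _ _ _ _ _ (by omega : ¬ m ≤ i), circVal_gt _ _ _ _ _ _ (by omega : ¬ m ≤ i+1)]
      have : ∀ F : ℕ → ℝ, (∀ j ∈ Finset.Ico 1 m, a m j * circVal a c π i x j = a m j * F j) →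
          ∑ j ∈ Finset.Ico 1 m, a m j * circVal a c π i x j = ∑ j ∈ Finset.Ico 1 m, a m j * F j :=
        fun F hF => Finset.sum_congr rfl hF
      rw [this _ (fun j hj => by rw [ih j (Finset.mem_Ico.mp hj).2])]

lemma trunc_of_mem (t : ℝ) (h0 : 0 ≤ t) (h1 : t ≤ 1) : trunc t = t := by
  rw [trunc, max_eq_right h0, min_eq_right h1]

lemma trunc_of_nonpos (t : ℝ) (h : t ≤ 0) : trunc t = 0 := by
  rw [trunc, max_eq_left h, min_eq_right zero_le_one]

lemma trunc_of_ge_one (t : ℝ) (h : 1 ≤ t) : trunc t = 1 := by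
  rw [trunc, min_eq_left (le_max_of_le_right h)]

/-- The residual `r_m`. -/
def rterm (K : ℝ) (a : ℕ → ℕ → ℝ) (c : ℕ → ℝ) (m : ℕ) (y zp zm : ℕ → ℝ) : ℝ :=
  y m + K * zp m - K * zm m - (∑ j ∈ Finset.Ico 1 m, a m j * y j) - c m

lemma hasDerivAt_upd (y : ℕ → ℝ) (k m : ℕ) (t₀ : ℝ) :
    HasDerivAt (fun t => Function.update y k t m) (if m = k then 1 else 0) t₀ := by
  rcases eq_or_ne m k with h | h
  · subst h
    simp only [Function.update_self, if_pos rfl]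
    exact hasDerivAt_id t₀
  · simp only [Function.update_of_ne h, if_neg h]
    exact hasDerivAt_const t₀ _

lemma hasDerivAt_inner (K : ℝ) (a : ℕ → ℕ → ℝ) (c : ℕ → ℝ) (m k : ℕ) (y zp zm : ℕ → ℝ) :
    HasDerivAt (fun t => Function.update y k t m + K * zp m - K * zm m
        - (∑ j ∈ Finset.Ico 1 m, a m j * Function.update y k t j) - c m)
      ((if m = k then 1 else 0) - (if k ∈ Finset.Ico 1 m then a m k else 0)) (y k) := by
  have h1 : HasDerivAt (fun t => ∑ j ∈ Finset.Ico 1 m, a m j * Function.update y k t j)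
      (if k ∈ Finset.Ico 1 m then a m k else 0) (y k) := by
    have := HasDerivAt.fun_sum (fun j (_ : j ∈ Finset.Ico 1 m) =>
      (hasDerivAt_upd y k j (y k)).const_mul (a m j))
    refine this.congr_deriv ?_
    simp [mul_ite, Finset.sum_ite_eq]
  exact ((((hasDerivAt_upd y k m (y k)).add_const (K * zp m)).sub_const
    (K * zm m)).sub h1).sub_const (c m)

lemma qval_update_eq (K : ℝ) (a : ℕ → ℕ → ℝ) (c : ℕ → ℝ) (m k : ℕ) (y zp zm : ℕ → ℝ) (t : ℝ) :
    qval K a c m (Function.update y k t) zp zm =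
      (Function.update y k t m + K * zp m - K * zm m
          - (∑ j ∈ Finset.Ico 1 m, a m j * Function.update y k t j) - c m) ^ 2
        + 2 * K ^ 2 * zp m * zm m + 2 * K * zp m * (1 - Function.update y k t m)
        + 2 * K * zm m * Function.update y k t m := rfl

lemma hasDerivAt_qy (K : ℝ) (a : ℕ → ℕ → ℝ) (c : ℕ → ℝ) (m k : ℕ) (y zp zm : ℕ → ℝ) :
    HasDerivAt (fun t => qval K a c m (Function.update y k t) zp zm)
      (2 * rterm K a c m y zp zm *
          ((if m = k then 1 else 0) - (if k ∈ Finset.Ico 1 m then a m k else 0))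
        + (if m = k then 2 * K * zm m - 2 * K * zp m else 0)) (y k) := by
  have hsq := ((hasDerivAt_inner K a c m k y zp zm).fun_pow 2)
  have h3 : HasDerivAt (fun t => 2 * K * zp m * (1 - Function.update y k t m))
      (2 * K * zp m * (-(if m = k then 1 else 0))) (y k) :=
    (((hasDerivAt_upd y k m (y k)).const_sub 1)).const_mul _
  have h4 : HasDerivAt (fun t => 2 * K * zm m * Function.update y k t m)
      (2 * K * zm m * (if m = k then 1 else 0)) (y k) :=
    (hasDerivAt_upd y k m (y k)).const_mul _
  have := ((hsq.add_const (2 * K ^ 2 * zp m * zm m)).fun_add h3).fun_add h4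
  simp only [qval_update_eq]
  refine this.congr_deriv ?_
  have hupd : ∀ j, Function.update y k (y k) j = y j := fun j => by
    rw [Function.update_eq_self]
  simp only [hupd, rterm]
  split_ifs <;> ring

lemma hasDerivAt_py (n : ℕ) (K δ : ℝ) (a : ℕ → ℕ → ℝ) (c : ℕ → ℝ) (s : Finset ℕ) (k : ℕ)
    (y zp zm : ℕ → ℝ) :
    HasDerivAt (fun t => δ ^ (n + 1) * Function.update y k t n
        + ∑ m ∈ s, δ ^ m * qval K a c m (Function.update y k t) zp zm)
      (δ ^ (n + 1) * (if n = k then 1 else 0)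
        + ∑ m ∈ s, δ ^ m *
            (2 * rterm K a c m y zp zm *
                ((if m = k then 1 else 0) - (if k ∈ Finset.Ico 1 m then a m k else 0))
              + (if m = k then 2 * K * zm m - 2 * K * zp m else 0))) (y k) :=
  ((hasDerivAt_upd y k n (y k)).const_mul _).add
    (HasDerivAt.fun_sum fun m _ => (hasDerivAt_qy K a c m k y zp zm).const_mul _)

lemma dpy_eq (n : ℕ) (K δ : ℝ) (a : ℕ → ℕ → ℝ) (c : ℕ → ℝ) (k : ℕ) (y zp zm : ℕ → ℝ) :
    dpy n K δ a c k y zp zm =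
      δ ^ (n + 1) * (if n = k then 1 else 0)
        + ∑ m ∈ Finset.Icc 3 n, δ ^ m *
            (2 * rterm K a c m y zp zm *
                ((if m = k then 1 else 0) - (if k ∈ Finset.Ico 1 m then a m k else 0))
              + (if m = k then 2 * K * zm m - 2 * K * zp m else 0)) :=
  (hasDerivAt_py n K δ a c (Finset.Icc 3 n) k y zp zm).deriv

lemma dpiy_eq (n : ℕ) (K δ : ℝ) (a : ℕ → ℕ → ℝ) (c : ℕ → ℝ) (i k : ℕ) (y zp zm : ℕ → ℝ) :
    dpiy n K δ a c i k y zp zm =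
      δ ^ (n + 1) * (if n = k then 1 else 0)
        + ∑ m ∈ Finset.Icc (i + 1) n, δ ^ m *
            (2 * rterm K a c m y zp zm *
                ((if m = k then 1 else 0) - (if k ∈ Finset.Ico 1 m then a m k else 0))
              + (if m = k then 2 * K * zm m - 2 * K * zp m else 0)) :=
  (hasDerivAt_py n K δ a c (Finset.Icc (i + 1) n) k y zp zm).deriv

lemma hasDerivAt_qzp (K : ℝ) (a : ℕ → ℕ → ℝ) (c : ℕ → ℝ) (m k : ℕ) (y zp zm : ℕ → ℝ) :
    HasDerivAt (fun t => qval K a c m y (Function.update zp k t) zm)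
      ((if m = k then 1 else 0) *
        (2 * K * rterm K a c m y zp zm + 2 * K ^ 2 * zm m + 2 * K * (1 - y m))) (zp k) := by
  have hinner : HasDerivAt (fun t => y m + K * Function.update zp k t m - K * zm m
      - (∑ j ∈ Finset.Ico 1 m, a m j * y j) - c m)
      (K * (if m = k then 1 else 0)) (zp k) :=
    (((((hasDerivAt_upd zp k m (zp k)).const_mul K).const_add (y m)).sub_const
      (K * zm m)).sub_const _).sub_const (c m)
  have hsq := hinner.fun_pow 2
  have h2 : HasDerivAt (fun t => 2 * K ^ 2 * Function.update zp k t m * zm m)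
      (2 * K ^ 2 * (if m = k then 1 else 0) * zm m) (zp k) :=
    ((hasDerivAt_upd zp k m (zp k)).const_mul (2 * K ^ 2)).mul_const (zm m)
  have h3 : HasDerivAt (fun t => 2 * K * Function.update zp k t m * (1 - y m))
      (2 * K * (if m = k then 1 else 0) * (1 - y m)) (zp k) :=
    ((hasDerivAt_upd zp k m (zp k)).const_mul (2 * K)).mul_const _
  have := ((hsq.fun_add h2).fun_add h3).add_const (2 * K * zm m * y m)
  have heq : (fun t => (y m + K * Function.update zp k t m - K * zm m
      - (∑ j ∈ Finset.Ico 1 m, a m j * y j) - c m) ^ 2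
      + 2 * K ^ 2 * Function.update zp k t m * zm m
      + 2 * K * Function.update zp k t m * (1 - y m) + 2 * K * zm m * y m)
      = fun t => qval K a c m y (Function.update zp k t) zm := by
    funext t
    simp only [qval, Function.update_apply]
    all_goals split_ifs <;> ring
  rw [heq] at this
  refine this.congr_deriv ?_
  have hupd : ∀ j, Function.update zp k (zp k) j = zp j := fun j => by
    rw [Function.update_eq_self]
  simp only [hupd, rterm, pow_one]
  split_ifs <;> ring

lemma hasDerivAt_qzm (K : ℝ) (a : ℕ → ℕ → ℝ) (c : ℕ → ℝ) (m k : ℕ) (y zp zm : ℕ → ℝ) :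
    HasDerivAt (fun t => qval K a c m y zp (Function.update zm k t))
      ((if m = k then 1 else 0) *
        (-(2 * K) * rterm K a c m y zp zm + 2 * K ^ 2 * zp m + 2 * K * y m)) (zm k) := by
  have hinner : HasDerivAt (fun t => y m + K * zp m - K * Function.update zm k t m
      - (∑ j ∈ Finset.Ico 1 m, a m j * y j) - c m)
      (-(K * (if m = k then 1 else 0))) (zm k) :=
    ((((((hasDerivAt_upd zm k m (zm k)).const_mul K).const_sub
      (y m + K * zp m))).sub_const _).sub_const (c m))
  have hsq := hinner.fun_pow 2
  have h2 : HasDerivAt (fun t => 2 * K ^ 2 * zp m * Function.update zm k t m)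
      (2 * K ^ 2 * zp m * (if m = k then 1 else 0)) (zm k) :=
    (hasDerivAt_upd zm k m (zm k)).const_mul _
  have h3 : HasDerivAt (fun t => 2 * K * Function.update zm k t m * y m)
      (2 * K * (if m = k then 1 else 0) * y m) (zm k) :=
    ((hasDerivAt_upd zm k m (zm k)).const_mul (2 * K)).mul_const _
  have := ((hsq.fun_add h2).add_const (2 * K * zp m * (1 - y m))).fun_add h3
  have heq : (fun t => (y m + K * zp m - K * Function.update zm k t m
      - (∑ j ∈ Finset.Ico 1 m, a m j * y j) - c m) ^ 2
      + 2 * K ^ 2 * zp m * Function.update zm k t m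
      + 2 * K * zp m * (1 - y m) + 2 * K * Function.update zm k t m * y m)
      = fun t => qval K a c m y zp (Function.update zm k t) := by
    funext t
    simp only [qval, Function.update_apply]
    all_goals split_ifs <;> ring
  rw [heq] at this
  refine this.congr_deriv ?_
  have hupd : ∀ j, Function.update zm k (zm k) j = zm j := fun j => by
    rw [Function.update_eq_self]
  simp only [hupd, rterm, pow_one]
  split_ifs <;> ring

lemma dpzp_eq (n : ℕ) (K δ : ℝ) (a : ℕ → ℕ → ℝ) (c : ℕ → ℝ) (k : ℕ) (y zp zm : ℕ → ℝ)
    (h3 : 3 ≤ k) (hn : k ≤ n) :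
    dpzp n K δ a c k y zp zm =
      δ ^ k * (2 * K * rterm K a c k y zp zm + 2 * K ^ 2 * zm k + 2 * K * (1 - y k)) := by
  have hd : HasDerivAt (fun t => pval n K δ a c y (Function.update zp k t) zm)
      (∑ m ∈ Finset.Icc 3 n, δ ^ m * ((if m = k then 1 else 0) *
        (2 * K * rterm K a c m y zp zm + 2 * K ^ 2 * zm m + 2 * K * (1 - y m)))) (zp k) :=
    (HasDerivAt.fun_sum fun m _ => (hasDerivAt_qzp K a c m k y zp zm).const_mul _).const_add _
  rw [dpzp, hd.deriv]
  rw [Finset.sum_eq_single k]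
  · simp
  · intro m _ hm; simp [hm]
  · intro h; exact absurd (Finset.mem_Icc.mpr ⟨h3, hn⟩) h

lemma dpzm_eq (n : ℕ) (K δ : ℝ) (a : ℕ → ℕ → ℝ) (c : ℕ → ℝ) (k : ℕ) (y zp zm : ℕ → ℝ)
    (h3 : 3 ≤ k) (hn : k ≤ n) :
    dpzm n K δ a c k y zp zm =
      δ ^ k * (-(2 * K) * rterm K a c k y zp zm + 2 * K ^ 2 * zp k + 2 * K * y k) := by
  have hd : HasDerivAt (fun t => pval n K δ a c y zp (Function.update zm k t))
      (∑ m ∈ Finset.Icc 3 n, δ ^ m * ((if m = k then 1 else 0) *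
        (-(2 * K) * rterm K a c m y zp zm + 2 * K ^ 2 * zp m + 2 * K * y m))) (zm k) :=
    (HasDerivAt.fun_sum fun m _ => (hasDerivAt_qzm K a c m k y zp zm).const_mul _).const_add _
  rw [dpzm, hd.deriv]
  rw [Finset.sum_eq_single k]
  · simp
  · intro m _ hm; simp [hm]
  · intro h; exact absurd (Finset.mem_Icc.mpr ⟨h3, hn⟩) h

lemma seg_mid (I' y ε u : ℝ) (hlo : 3*u ≤ I') (hhi : I' ≤ 1 - 3*u)
    (hdev : |I' - y| + 3*u ≤ 3/2*ε) :
    ∀ t, |t| ≤ 3*u → trunc (I' + t) = 1 * (I' + t) + 0 ∧ |trunc (I' + t) - y| ≤ 3/2*ε := by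
  intro t ht
  rw [abs_le] at ht
  rw [trunc_of_mem _ (by linarith) (by linarith), one_mul, add_zero]
  refine ⟨rfl, ?_⟩
  have h := abs_sub_abs_le_abs_sub (I' + t - y) (I' - y)
  have h2 : |I' + t - y - (I' - y)| = |t| := by ring_nf
  rw [abs_le] at *
  constructor <;> cases' abs_cases (I' - y) with h3 h3 <;> linarith [ht.1, ht.2]

lemma seg_lo (I' y ε u : ℝ) (hhi : I' + 3*u ≤ 0) (hdev : |y| ≤ 3/2*ε) :
    ∀ t, |t| ≤ 3*u → trunc (I' + t) = 0 * (I' + t) + 0 ∧ |trunc (I' + t) - y| ≤ 3/2*ε := by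
  intro t ht
  rw [abs_le] at ht
  rw [trunc_of_nonpos _ (by linarith), zero_mul, add_zero]
  refine ⟨rfl, ?_⟩
  rw [zero_sub, abs_neg]
  exact hdev

lemma seg_hi (I' y ε u : ℝ) (hlo : 1 ≤ I' - 3*u) (hdev : |1 - y| ≤ 3/2*ε) :
    ∀ t, |t| ≤ 3*u → trunc (I' + t) = 0 * (I' + t) + 1 ∧ |trunc (I' + t) - y| ≤ 3/2*ε := by
  intro t ht
  rw [abs_le] at ht
  rw [trunc_of_ge_one _ (by linarith), zero_mul, zero_add]
  exact ⟨rfl, hdev⟩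

/-- The heart of the KKT case analysis for a single gate. -/
lemma gate_core (K δ ε G I y zp zm r : ℝ)
    (hK : 1 ≤ K) (hδ0 : 0 < δ) (hδ : 16*K^2*δ ≤ 1) (hε0 : 0 < ε) (hε1 : ε ≤ 1)
    (hy0 : 0 ≤ y) (hy1 : y ≤ 1) (hzp0 : 0 ≤ zp) (hzp1 : zp ≤ 1)
    (hzm0 : 0 ≤ zm) (hzm1 : zm ≤ 1)
    (hI : |I| ≤ K) (hr : r = y + K*(zp - zm) - I) (hG : |G| ≤ K^2*δ*ε/2)
    (Zp1 : 0 < zp → r + K*zm + (1-y) ≤ 0) (Zp2 : zp < 1 → 0 ≤ r + K*zm + (1-y))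
    (Zm1 : 0 < zm → -r + K*zp + y ≤ 0) (Zm2 : zm < 1 → 0 ≤ -r + K*zp + y)
    (Y1 : 0 < y → G + r - K*zp + K*zm ≤ 0) (Y2 : y < 1 → 0 ≤ G + r - K*zp + K*zm) :
    ∃ πl lam σp σm bp bm : ℝ,
      |πl| ≤ 8*K^2*δ*ε ∧ (0 ≤ lam ∧ lam ≤ 1) ∧
      (σp = 0 ∨ σp = 1) ∧ (σm = 0 ∨ σm = 1) ∧
      (∀ t, |t| ≤ 3*(K^2*δ*ε) →
        trunc (I + πl + t) = σp * (I + πl + t) + bp ∧ |trunc (I + πl + t) - y| ≤ 3/2*ε) ∧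
      (∀ t, |t| ≤ 3*(K^2*δ*ε) →
        trunc (I - πl + t) = σm * (I - πl + t) + bm ∧ |trunc (I - πl + t) - y| ≤ 3/2*ε) ∧
      -r = (lam * σp + (1 - lam) * σm) * G := by
  set u : ℝ := K^2*δ*ε with hu
  have hK2 : 1 ≤ K^2 := one_le_pow₀ hK
  have hu0 : 0 < u := by positivity
  have hu16 : 16*u ≤ ε := by
    rw [hu]; nlinarith
  have huu : u ≤ 1/16 := by linarith
  obtain ⟨hGlo, hGhi⟩ := abs_le.mp hG
  -- at most one of zp, zm is positive
  have hzpzm : zp = 0 ∨ zm = 0 := by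
    by_contra h
    push_neg at h
    have h1 := Zp1 (lt_of_le_of_ne hzp0 (Ne.symm h.1))
    have h2 := Zm1 (lt_of_le_of_ne hzm0 (Ne.symm h.2))
    nlinarith [mul_pos (lt_of_lt_of_le zero_lt_one hK) (lt_of_le_of_ne hzm0 (Ne.symm h.2)),
      mul_pos (lt_of_lt_of_le zero_lt_one hK) (lt_of_le_of_ne hzp0 (Ne.symm h.1))]
  obtain ⟨hIlo, hIhi⟩ := abs_le.mp hI
  by_cases hzpz : zp = 0
  · by_cases hzmz : zm = 0
    · -- Case 1 : zp = zm = 0, r = y - I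
      subst hzpz; subst hzmz
      have hrv : r = y - I := by rw [hr]; ring
      have hI1 : I ≤ 1 := by have := Zp2 zero_lt_one; linarith
      have hI0 : 0 ≤ I := by have := Zm2 zero_lt_one; linarith
      rcases eq_or_lt_of_le hy0 with hy0' | hy0'
      · -- 1b : y = 0
        have hy' : y = 0 := hy0'.symm
        have hIG : I ≤ G := by have := Y2 (by linarith); rw [hrv, hy'] at this; linarith
        have hG0 : 0 ≤ G := le_trans hI0 hIG
        refine ⟨8*u, if hGz : G = 0 then 0 else I/G, 1, 0, 0, 0, ?_, ?_, Or.inr rfl,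
          Or.inl rfl, ?_, ?_, ?_⟩
        · rw [abs_of_nonneg (by linarith)]; rw [hu]; ring_nf; linarith
        · constructor
          · split_ifs with hGz
            · exact le_refl 0
            · exact div_nonneg hI0 hG0
          · split_ifs with hGz
            · exact zero_le_one
            · exact div_le_one_of_le₀ hIG hG0
        · exact seg_mid (I + 8*u) y ε u (by linarith) (by linarith)
            (by rw [hy']; rw [abs_of_nonneg (by linarith)]; linarith)
        · exact seg_lo (I - 8*u) y ε u (by linarith) (by rw [hy', abs_zero]; linarith)
        · rw [hrv, hy']
          split_ifs with hGz
          · have : I = 0 := le_antisymm (hGz ▸ hIG) hI0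
            rw [this, hGz]; ring
          · field_simp
            ring
      rcases eq_or_lt_of_le hy1 with hy1' | hy1'
      · -- 1c : y = 1
        have hIG : 1 + G ≤ I := by have := Y1 (by linarith); rw [hrv, hy1'] at this; linarith
        have hG0 : G ≤ 0 := by linarith
        refine ⟨-(8*u), if hGz : G = 0 then 0 else (1-I)/(-G), 1, 0, 0, 1, ?_, ?_, Or.inr rfl,
          Or.inl rfl, ?_, ?_, ?_⟩
        · rw [abs_neg, abs_of_nonneg (by linarith)]; rw [hu]; ring_nf; linarith
        · constructor
          · split_ifs with hGz
            · exact le_refl 0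
            · exact div_nonneg (by linarith) (by linarith)
          · split_ifs with hGz
            · exact zero_le_one
            · exact div_le_one_of_le₀ (by linarith) (by linarith)
        · have : I + -(8*u) = I - 8*u := by ring
          rw [this]
          exact seg_mid (I - 8*u) y ε u (by linarith) (by linarith)
            (by rw [hy1']; cases' abs_cases (I - 8*u - 1) with h h <;> linarith [h.1])
        · have : I - -(8*u) = I + 8*u := by ring
          rw [this]
          exact seg_hi (I + 8*u) y ε u (by linarith) (by rw [hy1']; simp; linarith)
        · rw [hrv, hy1']
          split_ifs with hGz
          · have : I = 1 := le_antisymm hI1 (by rw [hGz] at hIG; linarith)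
            rw [this, hGz]; ring
          · have hGne : -G ≠ 0 := by intro h; exact hGz (by linarith)
            field_simp
            ring
      · -- 1a : 0 < y < 1
        have heq : G + r = 0 := le_antisymm (by have := Y1 hy0'; linarith)
          (by have := Y2 hy1'; linarith)
        have hrG : r = -G := by linarith
        have hIy : I = y + G := by rw [hrv] at hrG; linarith
        by_cases hc1 : I < 4*u
        · -- near 0
          refine ⟨8*u, 1, 1, 0, 0, 0, ?_, ⟨zero_le_one, le_refl 1⟩, Or.inr rfl, Or.inl rfl,
            ?_, ?_, ?_⟩
          · rw [abs_of_nonneg (by linarith)]; rw [hu]; ring_nf; linarith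
          · exact seg_mid (I + 8*u) y ε u (by linarith) (by linarith)
              (by cases' abs_cases (I + 8*u - y) with h h <;> [skip; skip] <;> rw [h.1] <;>
                  rw [hIy] <;> linarith)
          · exact seg_lo (I - 8*u) y ε u (by linarith)
              (by rw [abs_of_nonneg hy0]; rw [hIy] at hc1; linarith)
          · rw [hrG]; ring
        by_cases hc2 : 1 - 4*u < I
        · -- near 1
          refine ⟨-(8*u), 1, 1, 0, 0, 1, ?_, ⟨zero_le_one, le_refl 1⟩, Or.inr rfl, Or.inl rfl,
            ?_, ?_, ?_⟩
          · rw [abs_neg, abs_of_nonneg (by linarith)]; rw [hu]; ring_nf; linarith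
          · have : I + -(8*u) = I - 8*u := by ring
            rw [this]
            exact seg_mid (I - 8*u) y ε u (by linarith) (by linarith)
              (by cases' abs_cases (I - 8*u - y) with h h <;> rw [h.1] <;> rw [hIy] <;> linarith)
          · have : I - -(8*u) = I + 8*u := by ring
            rw [this]
            exact seg_hi (I + 8*u) y ε u (by linarith)
              (by rw [abs_of_nonneg (by linarith)]; rw [hIy] at hc2; linarith)
          · rw [hrG]; ring
        · -- middle
          push_neg at hc1 hc2
          refine ⟨0, 1, 1, 1, 0, 0, by rw [abs_zero]; positivity,
            ⟨zero_le_one, le_refl 1⟩, Or.inr rfl, Or.inr rfl, ?_, ?_, ?_⟩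
          · rw [add_zero]
            exact seg_mid I y ε u (by linarith) (by linarith)
              (by cases' abs_cases (I - y) with h h <;> rw [h.1] <;> rw [hIy] <;> linarith)
          · rw [sub_zero]
            exact seg_mid I y ε u (by linarith) (by linarith)
              (by cases' abs_cases (I - y) with h h <;> rw [h.1] <;> rw [hIy] <;> linarith)
          · rw [hrG]; ring
    · -- Case 3 : zp = 0, zm > 0
      subst hzpz
      have hzm' : 0 < zm := lt_of_le_of_ne hzm0 (Ne.symm hzmz)
      have hry : y ≤ r := by have := Zm1 hzm'; linarith
      rcases eq_or_lt_of_le hzm1 with hzm1' | hzm1'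
      · -- zm = 1 : I = -K, y = 0, r = 0
        have hIK : I = y - K - r := by rw [hr, hzm1']; ring
        have hrley : r ≤ y := by rw [hIK] at hIlo; linarith
        have hreq : r = y := le_antisymm hrley hry
        have hy' : y = 0 := by
          by_contra h
          have hy'' : 0 < y := lt_of_le_of_ne hy0 (Ne.symm h)
          have := Y1 hy''
          rw [hzm1'] at this
          nlinarith
        have hIval : I = -K := by rw [hIK, hreq, hy']; ring
        refine ⟨0, 0, 0, 0, 0, 0, by rw [abs_zero]; positivity, ⟨le_refl 0, zero_le_one⟩,
          Or.inl rfl, Or.inl rfl, ?_, ?_, ?_⟩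
        · rw [add_zero]
          exact seg_lo I y ε u (by rw [hIval]; linarith) (by rw [hy', abs_zero]; linarith)
        · rw [sub_zero]
          exact seg_lo I y ε u (by rw [hIval]; linarith) (by rw [hy', abs_zero]; linarith)
        · rw [hreq, hy']; ring
      · -- zm < 1 : r = y, I = -K zm
        have hrley : r ≤ y := by have := Zm2 hzm1'; linarith
        have hreq : r = y := le_antisymm hrley hry
        have hIval : I = -(K*zm) := by rw [hr] at hreq; linarith [hreq]
        rcases eq_or_lt_of_le hy0 with hy0' | hy0'
        · -- 3a : y = 0, r = 0
          have hy' : y = 0 := hy0'.symm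
          have hr0 : r = 0 := by rw [hreq, hy']
          by_cases hfar : 4*u ≤ K*zm
          · refine ⟨0, 0, 0, 0, 0, 0, by rw [abs_zero]; positivity, ⟨le_refl 0, zero_le_one⟩,
              Or.inl rfl, Or.inl rfl, ?_, ?_, ?_⟩
            · rw [add_zero]
              exact seg_lo I y ε u (by rw [hIval]; linarith) (by rw [hy', abs_zero]; linarith)
            · rw [sub_zero]
              exact seg_lo I y ε u (by rw [hIval]; linarith) (by rw [hy', abs_zero]; linarith)
            · rw [hr0]; ring
          · push_neg at hfar
            have hI0 : -(4*u) < I := by rw [hIval]; linarith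
            have hKzm : 0 ≤ K*zm := mul_nonneg (by linarith) hzm0
            have hInp : I ≤ 0 := by rw [hIval]; linarith
            refine ⟨8*u, 0, 1, 0, 0, 0, ?_, ⟨le_refl 0, zero_le_one⟩, Or.inr rfl, Or.inl rfl,
              ?_, ?_, ?_⟩
            · rw [abs_of_nonneg (by linarith)]; rw [hu]; ring_nf; linarith
            · exact seg_mid (I + 8*u) y ε u (by linarith) (by linarith)
                (by rw [hy']; rw [abs_of_nonneg (by linarith)]; linarith)
            · exact seg_lo (I - 8*u) y ε u (by linarith) (by rw [hy', abs_zero]; linarith)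
            · rw [hr0]; ring
        · -- 3b : y > 0
          have hYG : y + K*zm ≤ -G := by have := Y1 hy0'; rw [hreq] at this; linarith
          have hKzm : 0 ≤ K*zm := mul_nonneg (by linarith) hzm0
          have hGneg : G < 0 := by linarith
          have hI0 : -(u/2) ≤ I := by rw [hIval]; linarith
          have hInp : I ≤ 0 := by rw [hIval]; linarith
          refine ⟨8*u, y/(-G), 1, 0, 0, 0, ?_, ?_, Or.inr rfl, Or.inl rfl, ?_, ?_, ?_⟩
          · rw [abs_of_nonneg (by linarith)]; rw [hu]; ring_nf; linarith
          · exact ⟨div_nonneg hy0 (by linarith), div_le_one_of_le₀ (by linarith) (by linarith)⟩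
          · exact seg_mid (I + 8*u) y ε u (by linarith) (by linarith)
              (by cases' abs_cases (I + 8*u - y) with h h <;> rw [h.1] <;> linarith)
          · exact seg_lo (I - 8*u) y ε u (by linarith)
              (by rw [abs_of_nonneg hy0]; linarith)
          · have hGne : -G ≠ 0 := by linarith
            rw [hreq]
            field_simp
            rw [mul_zero, add_zero, mul_neg, mul_div_assoc', mul_comm G y, mul_div_assoc,
              div_self (show G ≠ 0 by linarith), mul_one]
  · -- Case 2 : zp > 0 (hence zm = 0)
    have hzp' : 0 < zp := lt_of_le_of_ne hzp0 (Ne.symm hzpz)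
    have hzmz : zm = 0 := by
      rcases hzpzm with h | h
      · exact absurd h hzpz
      · exact h
    subst hzmz
    have hr1 : r ≤ y - 1 := by have := Zp1 hzp'; linarith
    have hzplt : zp < 1 := by
      rcases eq_or_lt_of_le hzp1 with h | h
      · exfalso
        have hIK : I = y + K - r := by rw [hr, h]; ring
        rw [hIK] at hIhi
        linarith
      · exact h
    have hreq : r = y - 1 := le_antisymm hr1 (by have := Zp2 hzplt; linarith)
    have hIval : I = 1 + K*zp := by rw [hr] at hreq; linarith [hreq]
    rcases eq_or_lt_of_le hy1 with hy1' | hy1'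
    · -- 2a : y = 1, r = 0
      have hr0 : r = 0 := by rw [hreq, hy1']; ring
      by_cases hfar : 4*u ≤ K*zp
      · refine ⟨0, 0, 0, 0, 1, 1, by rw [abs_zero]; positivity, ⟨le_refl 0, zero_le_one⟩,
          Or.inl rfl, Or.inl rfl, ?_, ?_, ?_⟩
        · rw [add_zero]
          exact seg_hi I y ε u (by rw [hIval]; linarith)
            (by rw [hy1', sub_self, abs_zero]; linarith)
        · rw [sub_zero]
          exact seg_hi I y ε u (by rw [hIval]; linarith)
            (by rw [hy1', sub_self, abs_zero]; linarith)
        · rw [hr0]; ring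
      · push_neg at hfar
        have hzppos : 0 < K*zp := by positivity
        refine ⟨8*u, 1, 0, 1, 1, 0, ?_, ⟨zero_le_one, le_refl 1⟩, Or.inl rfl, Or.inr rfl,
          ?_, ?_, ?_⟩
        · rw [abs_of_nonneg (by linarith)]; rw [hu]; ring_nf; linarith
        · exact seg_hi (I + 8*u) y ε u (by rw [hIval]; linarith)
            (by rw [hy1', sub_self, abs_zero]; linarith)
        · exact seg_mid (I - 8*u) y ε u (by rw [hIval]; linarith) (by rw [hIval]; linarith)
            (by rw [hy1']; cases' abs_cases (I - 8*u - 1) with h h <;> rw [h.1] <;>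
                rw [hIval] <;> linarith)
        · rw [hr0]; ring
    · -- 2b : y < 1
      have hYG : K*zp + (1-y) ≤ G := by have := Y2 hy1'; rw [hreq] at this; linarith
      have hzppos : 0 < K*zp := by positivity
      have hGpos : 0 < G := by linarith
      refine ⟨-(8*u), (1-y)/G, 1, 0, 0, 1, ?_, ?_, Or.inr rfl, Or.inl rfl, ?_, ?_, ?_⟩
      · rw [abs_neg, abs_of_nonneg (by linarith)]; rw [hu]; ring_nf; linarith
      · exact ⟨div_nonneg (by linarith) (by linarith),
          div_le_one_of_le₀ (by linarith) (by linarith)⟩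
      · have : I + -(8*u) = I - 8*u := by ring
        rw [this]
        exact seg_mid (I - 8*u) y ε u (by rw [hIval]; linarith) (by rw [hIval]; linarith)
          (by cases' abs_cases (I - 8*u - y) with h h <;> rw [h.1] <;> rw [hIval] <;> linarith)
      · have : I - -(8*u) = I + 8*u := by ring
        rw [this]
        exact seg_hi (I + 8*u) y ε u (by rw [hIval]; linarith)
          (by rw [abs_of_nonneg (by linarith)]; linarith)
      · rw [hreq]
        have hGne : G ≠ 0 := by linarith
        field_simp
        ring

/-- Gate input. -/
def Iterm (a : ℕ → ℕ → ℝ) (c : ℕ → ℝ) (y : ℕ → ℝ) (l : ℕ) : ℝ :=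
  (∑ j ∈ Finset.Ico 1 l, a l j * y j) + c l

lemma rterm_eq (K : ℝ) (a : ℕ → ℕ → ℝ) (c : ℕ → ℝ) (l : ℕ) (y zp zm : ℕ → ℝ) :
    rterm K a c l y zp zm = y l + K * (zp l - zm l) - Iterm a c y l := by
  rw [rterm, Iterm]; ring

lemma abs_Iterm_le (a : ℕ → ℕ → ℝ) (c : ℕ → ℝ) (y : ℕ → ℝ) (l : ℕ) (K : ℝ)
    (hK : (∑ j ∈ Finset.Ico 1 l, |a l j|) + |c l| ≤ K)
    (hy : ∀ j, 1 ≤ j → j < l → 0 ≤ y j ∧ y j ≤ 1) :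
    |Iterm a c y l| ≤ K := by
  rw [Iterm]
  calc |(∑ j ∈ Finset.Ico 1 l, a l j * y j) + c l|
      ≤ |∑ j ∈ Finset.Ico 1 l, a l j * y j| + |c l| := abs_add_le _ _
    _ ≤ (∑ j ∈ Finset.Ico 1 l, |a l j * y j|) + |c l| := by
        gcongr; exact Finset.abs_sum_le_sum_abs _ _
    _ ≤ (∑ j ∈ Finset.Ico 1 l, |a l j|) + |c l| := by
        have : ∀ j ∈ Finset.Ico 1 l, |a l j * y j| ≤ |a l j| := by
          intro j hj
          rcases Finset.mem_Ico.mp hj with ⟨h1, h2⟩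
          have hyj := hy j h1 h2
          rw [abs_mul]
          calc |a l j| * |y j| ≤ |a l j| * 1 := by
                have : |y j| ≤ 1 := by rw [abs_le]; constructor <;> linarith [hyj.1, hyj.2]
                exact mul_le_mul_of_nonneg_left this (abs_nonneg _)
            _ = |a l j| := mul_one _
        have := Finset.sum_le_sum this
        linarith
    _ ≤ K := hK

/-- Splitting `∂p/∂y_k = ∂p_k/∂y_k + δ^k (2 r_k - 2K zp_k + 2K zm_k)`. -/
lemma dpy_split (n : ℕ) (K δ : ℝ) (a : ℕ → ℕ → ℝ) (c : ℕ → ℝ) (k : ℕ) (y zp zm : ℕ → ℝ)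
    (h3 : 3 ≤ k) (hn : k ≤ n) :
    dpy n K δ a c k y zp zm = dpiy n K δ a c k k y zp zm
      + δ ^ k * (2 * rterm K a c k y zp zm + 2 * K * zm k - 2 * K * zp k) := by
  rw [dpy_eq, dpiy_eq]
  have hsplit : Finset.Icc 3 n = Finset.Ioc 2 k ∪ Finset.Icc (k+1) n := by
    ext m; simp [Finset.mem_Icc, Finset.mem_Ioc, Finset.mem_union]; omega
  have hdisj : Disjoint (Finset.Ioc 2 k) (Finset.Icc (k+1) n) := by
    rw [Finset.disjoint_left]
    intro m hm hm'
    simp [Finset.mem_Ioc] at hm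
    simp [Finset.mem_Icc] at hm'
    omega
  rw [hsplit, Finset.sum_union hdisj]
  have hsingle : ∑ m ∈ Finset.Ioc 2 k, δ ^ m *
      (2 * rterm K a c m y zp zm *
        ((if m = k then 1 else 0) - (if k ∈ Finset.Ico 1 m then a m k else 0))
        + (if m = k then 2 * K * zm m - 2 * K * zp m else 0))
      = δ ^ k * (2 * rterm K a c k y zp zm + 2 * K * zm k - 2 * K * zp k) := by
    rw [Finset.sum_eq_single k]
    · have h1 : ¬ (k ∈ Finset.Ico 1 k) := by simp
      rw [if_pos rfl, if_pos rfl, if_neg h1]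
      ring
    · intro m hm hmk
      have hm' := Finset.mem_Ioc.mp hm
      have h1 : ¬ (k ∈ Finset.Ico 1 m) := by simp [Finset.mem_Ico]; omega
      simp only [if_neg hmk, h1, if_false]
      ring
    · intro h
      exact absurd (Finset.mem_Ioc.mpr ⟨by omega, le_refl k⟩) h
  rw [hsingle]
  ring

/-- The step relation: `∂p_i/∂y_k = ∂p_{i+1}/∂y_k - 2 δ^{i+1} r_{i+1} a_{i+1,k}`. -/
lemma dpiy_step (n : ℕ) (K δ : ℝ) (a : ℕ → ℕ → ℝ) (c : ℕ → ℝ) (i k : ℕ) (y zp zm : ℕ → ℝ)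
    (hk1 : 1 ≤ k) (hki : k ≤ i) (hin : i + 1 ≤ n) :
    dpiy n K δ a c i k y zp zm = dpiy n K δ a c (i+1) k y zp zm
      - δ ^ (i+1) * (2 * rterm K a c (i+1) y zp zm * a (i+1) k) := by
  rw [dpiy_eq, dpiy_eq]
  have hsplit : Finset.Icc (i+1) n = insert (i+1) (Finset.Icc (i+2) n) := by
    ext m; simp [Finset.mem_Icc, Finset.mem_insert]; omega
  have hnotmem : (i+1) ∉ Finset.Icc (i+2) n := by simp
  rw [hsplit, Finset.sum_insert hnotmem]
  have h1 : ¬ ((i+1) = k) := by omega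
  have h2 : k ∈ Finset.Ico 1 (i+1) := Finset.mem_Ico.mpr ⟨hk1, by omega⟩
  simp only [if_neg h1, if_pos h2]
  ring

lemma pos_factor_nonpos {cst e : ℝ} (hc : 0 < cst) (h : cst * e ≤ 0) : e ≤ 0 := by
  by_contra h'
  push_neg at h'
  nlinarith [mul_pos hc h']

lemma pos_factor_nonneg {cst e : ℝ} (hc : 0 < cst) (h : 0 ≤ cst * e) : 0 ≤ e := by
  by_contra h'
  push_neg at h'
  nlinarith [mul_pos hc (neg_pos.mpr h')]

lemma gate_exists (n : ℕ) (a : ℕ → ℕ → ℝ) (c : ℕ → ℝ) (K : ℝ) (hK1 : 1 ≤ K)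
    (hK : ∀ i, 3 ≤ i → i ≤ n → (∑ j ∈ Finset.Ico 1 i, |a i j|) + |c i| ≤ K)
    (δ : ℝ) (hδ0 : 0 < δ) (hδ1 : δ < 1 / (16 * K ^ 2))
    (y zp zm : ℕ → ℝ) (hkkt : IsKKT n K δ a c y zp zm) (l : ℕ) :
    ∃ pl ll : ℝ, |pl| ≤ 8 * K ^ 2 * δ * (2 * K * δ) ^ (n - l) ∧ 0 ≤ ll ∧ ll ≤ 1 ∧
      (3 ≤ l → l ≤ n → |dpiy n K δ a c l l y zp zm| ≤ δ ^ (n + 1) * K ^ (n - l) →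
        ∃ σp σm bp bm : ℝ, (σp = 0 ∨ σp = 1) ∧ (σm = 0 ∨ σm = 1) ∧
          (∀ t, |t| ≤ 3 * (K ^ 2 * δ * (2 * K * δ) ^ (n - l)) →
            trunc (Iterm a c y l + pl + t) = σp * (Iterm a c y l + pl + t) + bp ∧
            |trunc (Iterm a c y l + pl + t) - y l| ≤ 3 / 2 * (2 * K * δ) ^ (n - l)) ∧
          (∀ t, |t| ≤ 3 * (K ^ 2 * δ * (2 * K * δ) ^ (n - l)) →
            trunc (Iterm a c y l - pl + t) = σm * (Iterm a c y l - pl + t) + bm ∧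
            |trunc (Iterm a c y l - pl + t) - y l| ≤ 3 / 2 * (2 * K * δ) ^ (n - l)) ∧
          -(2 * δ ^ l * rterm K a c l y zp zm)
            = (ll * σp + (1 - ll) * σm) * dpiy n K δ a c l l y zp zm) := by
  have hKpos : 0 < K := lt_of_lt_of_le zero_lt_one hK1
  by_cases hok : 3 ≤ l ∧ l ≤ n ∧ |dpiy n K δ a c l l y zp zm| ≤ δ ^ (n + 1) * K ^ (n - l)
  · obtain ⟨h3, hln, hgb⟩ := hok
    have hδl : (0:ℝ) < δ ^ l := pow_pos hδ0 l
    have hδ16 : 16 * K ^ 2 * δ ≤ 1 := by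
      have h16 : (0:ℝ) < 16 * K ^ 2 := by positivity
      have := (lt_div_iff₀ h16).mp hδ1
      nlinarith
    have h2Kδ : 2 * K * δ ≤ 1 := by nlinarith
    have h2Kδ0 : (0:ℝ) < 2 * K * δ := by positivity
    set ε : ℝ := (2 * K * δ) ^ (n - l) with hε
    have hε0 : 0 < ε := pow_pos h2Kδ0 _
    have hε1 : ε ≤ 1 := pow_le_one₀ (le_of_lt h2Kδ0) h2Kδ
    set g : ℝ := dpiy n K δ a c l l y zp zm with hg
    set G : ℝ := g / (2 * δ ^ l) with hG
    have hgG : g = 2 * δ ^ l * G := by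
      rw [hG]; field_simp
    -- KKT extraction
    have hy01 := Set.mem_Icc.mp ((hkkt.1) l (by omega) hln)
    have hzp01 := Set.mem_Icc.mp (((hkkt.2.1) l h3 hln).1)
    have hzm01 := Set.mem_Icc.mp (((hkkt.2.1) l h3 hln).2)
    have hYk := (hkkt.2.2.1) l (by omega) hln
    have hZk := (hkkt.2.2.2) l h3 hln
    have hdpyv : dpy n K δ a c l y zp zm
        = 2 * δ ^ l * (G + rterm K a c l y zp zm - K * zp l + K * zm l) := by
      rw [dpy_split n K δ a c l y zp zm h3 hln, ← hg, hgG]; ring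
    have hdpzpv : dpzp n K δ a c l y zp zm
        = 2 * K * δ ^ l * (rterm K a c l y zp zm + K * zm l + (1 - y l)) := by
      rw [dpzp_eq n K δ a c l y zp zm h3 hln]; ring
    have hdpzmv : dpzm n K δ a c l y zp zm
        = 2 * K * δ ^ l * (-(rterm K a c l y zp zm) + K * zp l + y l) := by
      rw [dpzm_eq n K δ a c l y zp zm h3 hln]; ring
    have hfac : (0:ℝ) < 2 * δ ^ l := by positivity
    have hfacK : (0:ℝ) < 2 * K * δ ^ l := by positivity
    -- the |G| bound
    have hGb : |G| ≤ K ^ 2 * δ * ε / 2 := by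
      rw [hG, abs_div, abs_of_pos hfac, div_le_iff₀ hfac]
      calc |g| ≤ δ ^ (n + 1) * K ^ (n - l) := hgb
        _ ≤ K ^ 2 * δ * ε / 2 * (2 * δ ^ l) := by
            rw [hε, mul_pow, mul_pow]
            have hnl : n + 1 = (l + 1) + (n - l) := by omega
            rw [hnl, pow_add, pow_add, pow_one]
            have h1 : (1:ℝ) ≤ K ^ 2 * 2 ^ (n - l) := by
              have := one_le_pow₀ (M₀ := ℝ) hK1 (n := 2)
              have h2 : (1:ℝ) ≤ 2 ^ (n - l) := one_le_pow₀ (by norm_num)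
              nlinarith
            have hpos : (0:ℝ) ≤ δ ^ l * δ * δ ^ (n - l) * K ^ (n - l) := by positivity
            nlinarith [mul_le_mul_of_nonneg_left h1 hpos]
    obtain ⟨πl, lam, σp, σm, bp, bm, hb, hl01, hsp, hsm, hsegp, hsegm, halg⟩ :=
      gate_core K δ ε G (Iterm a c y l) (y l) (zp l) (zm l) (rterm K a c l y zp zm)
        hK1 hδ0 hδ16 hε0 hε1 hy01.1 hy01.2 hzp01.1 hzp01.2 hzm01.1 hzm01.2
        (abs_Iterm_le a c y l K (hK l h3 hln)
          (fun j hj1 hj2 => Set.mem_Icc.mp ((hkkt.1) j hj1 (by omega))))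
        (rterm_eq K a c l y zp zm) hGb
        (fun h => pos_factor_nonpos hfacK (hdpzpv ▸ (hZk.1.1 h)))
        (fun h => pos_factor_nonneg hfacK (hdpzpv ▸ (hZk.1.2 h)))
        (fun h => pos_factor_nonpos hfacK (hdpzmv ▸ (hZk.2.1 h)))
        (fun h => pos_factor_nonneg hfacK (hdpzmv ▸ (hZk.2.2 h)))
        (fun h => pos_factor_nonpos hfac (hdpyv ▸ (hYk.1 h)))
        (fun h => pos_factor_nonneg hfac (hdpyv ▸ (hYk.2 h)))
    refine ⟨πl, lam, hb, hl01.1, hl01.2, fun _ _ _ => ⟨σp, σm, bp, bm, hsp, hsm,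
      hsegp, hsegm, ?_⟩⟩
    rw [hgG]
    nlinarith [halg]
  · exact ⟨0, 0, by rw [abs_zero]; positivity, le_refl 0, zero_le_one,
      fun h1 h2 h3 => absurd ⟨h1, h2, h3⟩ hok⟩

lemma signedAbove_high (i : ℕ) (π : ℕ → ℝ) (T : Finset ℕ) (m : ℕ) (hm : i + 1 < m) :
    signedAbove i π T m = signedAbove (i + 1) π (T.erase (i + 1)) m := by
  simp only [signedAbove, Finset.mem_erase]
  have h1 : ¬ m ≤ i := by omega
  have h2 : ¬ m ≤ i + 1 := by omega
  have h3 : m ≠ i + 1 := by omega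
  simp [h1, h2, h3]

lemma signedAbove_at (i : ℕ) (π : ℕ → ℝ) (T : Finset ℕ) :
    signedAbove i π T (i + 1) = if i + 1 ∈ T then π (i + 1) else -π (i + 1) := by
  simp only [signedAbove]
  have h1 : ¬ i + 1 ≤ i := by omega
  simp [h1]

/-- Base case of the induction, `i = n`. -/
lemma base_main (n : ℕ) (hn : 3 ≤ n) (a : ℕ → ℕ → ℝ) (c : ℕ → ℝ) (K δ : ℝ)
    (y zp zm π lam : ℕ → ℝ) :
    ∃ (coef : Finset ℕ → ℕ → ℝ) (ofs : Finset ℕ → ℝ),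
      (∀ T ∈ (Finset.Icc (n + 1) n).powerset,
        (∑ j ∈ Finset.Icc 1 n, |coef T j|) ≤ K ^ (n - n) ∧
        ∀ x : ℕ → ℝ, (∀ j, 1 ≤ j → j ≤ n → |x j - y j| ≤ 3 / 2 * (2 * K * δ) ^ (n - n)) →
          circVal a c (signedAbove n π T) n x n
            = (∑ j ∈ Finset.Icc 1 n, coef T j * x j) + ofs T)
      ∧ ∀ k, 1 ≤ k → k ≤ n → dpiy n K δ a c n k y zp zm
          = δ ^ (n + 1) * ∑ T ∈ (Finset.Icc (n + 1) n).powerset,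
              (∏ j ∈ Finset.Icc (n + 1) n, (if j ∈ T then lam j else 1 - lam j)) * coef T k := by
  refine ⟨fun _ j => if j = n then 1 else 0, fun _ => 0, fun T _ => ⟨?_, ?_⟩, ?_⟩
  · have h1 : ∀ j : ℕ, |if j = n then (1:ℝ) else 0| = if j = n then 1 else 0 := by
      intro j; split_ifs <;> simp
    simp only [h1]
    rw [Finset.sum_ite_eq' (Finset.Icc 1 n) n (fun _ => (1:ℝ))]
    have hmem : n ∈ Finset.Icc 1 n := Finset.mem_Icc.mpr ⟨by omega, le_rfl⟩
    rw [if_pos hmem, Nat.sub_self, pow_zero]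
  · intro x _
    rw [circVal_le _ _ _ _ _ _ le_rfl]
    have : ∀ j ∈ Finset.Icc 1 n, (if j = n then (1:ℝ) else 0) * x j
        = if j = n then x j else 0 := by
      intro j _; split_ifs <;> simp
    rw [Finset.sum_congr rfl this, Finset.sum_ite_eq' (Finset.Icc 1 n) n x]
    have hmem : n ∈ Finset.Icc 1 n := Finset.mem_Icc.mpr ⟨by omega, le_rfl⟩
    simp [hmem]
  · intro k hk1 hkn
    rw [dpiy_eq]
    have hempty : Finset.Icc (n + 1) n = ∅ := Finset.Icc_eq_empty (by omega)
    rw [hempty]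
    simp only [Finset.sum_empty, add_zero, Finset.powerset_empty, Finset.sum_singleton,
      Finset.prod_empty, one_mul]
    by_cases h : k = n
    · subst h; simp
    · have h' : ¬ (n = k) := fun hh => h hh.symm
      simp [h, h']

/-- Inductive step of the backpropagation induction. -/
lemma step_main (n i : ℕ) (hi2 : 2 ≤ i) (hin : i + 1 ≤ n)
    (a : ℕ → ℕ → ℝ) (c : ℕ → ℝ) (K δ : ℝ) (hK1 : 1 ≤ K) (hδ0 : 0 < δ)
    (h2Kδ : 2 * K * δ ≤ 1)
    (hsa : (∑ j ∈ Finset.Ico 1 (i + 1), |a (i + 1) j|) + |c (i + 1)| ≤ K)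
    (y zp zm π lam : ℕ → ℝ)
    (hlam0 : 0 ≤ lam (i + 1)) (hlam1 : lam (i + 1) ≤ 1)
    (σp σm bp bm : ℝ) (hsp : σp = 0 ∨ σp = 1) (hsm : σm = 0 ∨ σm = 1)
    (hsegp : ∀ t, |t| ≤ 3 * (K ^ 2 * δ * (2 * K * δ) ^ (n - (i + 1))) →
      trunc (Iterm a c y (i + 1) + π (i + 1) + t)
          = σp * (Iterm a c y (i + 1) + π (i + 1) + t) + bp ∧
        |trunc (Iterm a c y (i + 1) + π (i + 1) + t) - y (i + 1)|
          ≤ 3 / 2 * (2 * K * δ) ^ (n - (i + 1)))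
    (hsegm : ∀ t, |t| ≤ 3 * (K ^ 2 * δ * (2 * K * δ) ^ (n - (i + 1))) →
      trunc (Iterm a c y (i + 1) - π (i + 1) + t)
          = σm * (Iterm a c y (i + 1) - π (i + 1) + t) + bm ∧
        |trunc (Iterm a c y (i + 1) - π (i + 1) + t) - y (i + 1)|
          ≤ 3 / 2 * (2 * K * δ) ^ (n - (i + 1)))
    (halg : -(2 * δ ^ (i + 1) * rterm K a c (i + 1) y zp zm)
      = (lam (i + 1) * σp + (1 - lam (i + 1)) * σm) * dpiy n K δ a c (i + 1) (i + 1) y zp zm)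
    (coef : Finset ℕ → ℕ → ℝ) (ofs : Finset ℕ → ℝ)
    (hcoef : ∀ T ∈ (Finset.Icc (i + 2) n).powerset,
      (∑ j ∈ Finset.Icc 1 (i + 1), |coef T j|) ≤ K ^ (n - (i + 1)) ∧
      ∀ x : ℕ → ℝ, (∀ j, 1 ≤ j → j ≤ i + 1 → |x j - y j| ≤ 3 / 2 * (2 * K * δ) ^ (n - (i + 1))) →
        circVal a c (signedAbove (i + 1) π T) (i + 1) x n
          = (∑ j ∈ Finset.Icc 1 (i + 1), coef T j * x j) + ofs T)
    (hdpi : ∀ k, 1 ≤ k → k ≤ i + 1 → dpiy n K δ a c (i + 1) k y zp zm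
        = δ ^ (n + 1) * ∑ T ∈ (Finset.Icc (i + 2) n).powerset,
            (∏ j ∈ Finset.Icc (i + 2) n, (if j ∈ T then lam j else 1 - lam j)) * coef T k) :
    ∃ (coef' : Finset ℕ → ℕ → ℝ) (ofs' : Finset ℕ → ℝ),
      (∀ T' ∈ (Finset.Icc (i + 1) n).powerset,
        (∑ j ∈ Finset.Icc 1 i, |coef' T' j|) ≤ K ^ (n - i) ∧
        ∀ x : ℕ → ℝ, (∀ j, 1 ≤ j → j ≤ i → |x j - y j| ≤ 3 / 2 * (2 * K * δ) ^ (n - i)) →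
          circVal a c (signedAbove i π T') i x n
            = (∑ j ∈ Finset.Icc 1 i, coef' T' j * x j) + ofs' T')
      ∧ ∀ k, 1 ≤ k → k ≤ i → dpiy n K δ a c i k y zp zm
          = δ ^ (n + 1) * ∑ T' ∈ (Finset.Icc (i + 1) n).powerset,
              (∏ j ∈ Finset.Icc (i + 1) n, (if j ∈ T' then lam j else 1 - lam j)) * coef' T' k := by
  have hKpos : 0 < K := lt_of_lt_of_le zero_lt_one hK1
  have hnii : n - i = (n - (i + 1)) + 1 := by omega
  have hε0 : (0:ℝ) < (2 * K * δ) ^ (n - (i + 1)) := by positivity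
  have hεrel : (2 * K * δ) ^ (n - i) = (2 * K * δ) * (2 * K * δ) ^ (n - (i + 1)) := by
    rw [hnii, pow_succ]; ring
  have hεmono : (3:ℝ) / 2 * (2 * K * δ) ^ (n - i) ≤ 3 / 2 * (2 * K * δ) ^ (n - (i + 1)) := by
    rw [hεrel]
    nlinarith
  have hIcc1 : Finset.Icc 1 (i + 1) = insert (i + 1) (Finset.Icc 1 i) := by
    ext m; simp [Finset.mem_Icc, Finset.mem_insert]; omega
  have hnotmem1 : (i + 1) ∉ Finset.Icc 1 i := by simp
  have hIco : Finset.Ico 1 (i + 1) = Finset.Icc 1 i := by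
    ext m; simp [Finset.mem_Icc, Finset.mem_Ico]
  refine ⟨fun T' j => coef (T'.erase (i + 1)) j
      + coef (T'.erase (i + 1)) (i + 1) * ((if i + 1 ∈ T' then σp else σm) * a (i + 1) j),
    fun T' => ofs (T'.erase (i + 1))
      + coef (T'.erase (i + 1)) (i + 1) *
          ((if i + 1 ∈ T' then σp else σm) *
              (c (i + 1) + (if i + 1 ∈ T' then π (i + 1) else -π (i + 1)))
            + (if i + 1 ∈ T' then bp else bm)), ?_, ?_⟩
  · -- affine representation and coefficient bound
    intro T' hT'
    have hT'sub := Finset.mem_powerset.mp hT'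
    have hTmem : T'.erase (i + 1) ∈ (Finset.Icc (i + 2) n).powerset := by
      rw [Finset.mem_powerset]
      intro m hm
      rcases Finset.mem_erase.mp hm with ⟨hne, hmem⟩
      have := Finset.mem_Icc.mp (hT'sub hmem)
      exact Finset.mem_Icc.mpr ⟨by omega, this.2⟩
    obtain ⟨hA, hB⟩ := hcoef _ hTmem
    set T := T'.erase (i + 1) with hT
    set σ : ℝ := if i + 1 ∈ T' then σp else σm with hσ
    have hσ01 : 0 ≤ σ ∧ σ ≤ 1 := by
      rw [hσ]; split_ifs
      · rcases hsp with h | h <;> rw [h] <;> norm_num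
      · rcases hsm with h | h <;> rw [h] <;> norm_num
    constructor
    · -- coefficient bound
      have hd0 : 0 ≤ |coef T (i + 1)| := abs_nonneg _
      have hdS : |coef T (i + 1)| ≤ ∑ j ∈ Finset.Icc 1 (i + 1), |coef T j| :=
        Finset.single_le_sum (fun j _ => abs_nonneg (coef T j))
          (Finset.mem_Icc.mpr ⟨by omega, le_rfl⟩)
      have hS : (∑ j ∈ Finset.Icc 1 i, |coef T j|)
          = (∑ j ∈ Finset.Icc 1 (i + 1), |coef T j|) - |coef T (i + 1)| := by
        rw [hIcc1, Finset.sum_insert hnotmem1]; ring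
      have hsa' : (∑ j ∈ Finset.Icc 1 i, |a (i + 1) j|) ≤ K := by
        rw [← hIco]
        have : (0:ℝ) ≤ |c (i + 1)| := abs_nonneg _
        linarith
      have hsa0 : (0:ℝ) ≤ ∑ j ∈ Finset.Icc 1 i, |a (i + 1) j| :=
        Finset.sum_nonneg fun j _ => abs_nonneg _
      calc ∑ j ∈ Finset.Icc 1 i, |coef T j + coef T (i + 1) * (σ * a (i + 1) j)|
          ≤ ∑ j ∈ Finset.Icc 1 i, (|coef T j| + |coef T (i + 1)| * σ * |a (i + 1) j|) := by
            apply Finset.sum_le_sum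
            intro j _
            calc |coef T j + coef T (i + 1) * (σ * a (i + 1) j)|
                ≤ |coef T j| + |coef T (i + 1) * (σ * a (i + 1) j)| := abs_add_le _ _
              _ = |coef T j| + |coef T (i + 1)| * σ * |a (i + 1) j| := by
                  rw [abs_mul, abs_mul, abs_of_nonneg hσ01.1]; ring
        _ = (∑ j ∈ Finset.Icc 1 i, |coef T j|)
            + |coef T (i + 1)| * σ * (∑ j ∈ Finset.Icc 1 i, |a (i + 1) j|) := by
            rw [Finset.sum_add_distrib, Finset.mul_sum]
        _ ≤ (∑ j ∈ Finset.Icc 1 (i + 1), |coef T j|) * K := by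
            rw [hS]
            have h1 : |coef T (i + 1)| * σ * (∑ j ∈ Finset.Icc 1 i, |a (i + 1) j|)
                ≤ |coef T (i + 1)| * K := by
              calc |coef T (i + 1)| * σ * (∑ j ∈ Finset.Icc 1 i, |a (i + 1) j|)
                  ≤ |coef T (i + 1)| * 1 * K := by
                    apply mul_le_mul
                    · exact mul_le_mul_of_nonneg_left hσ01.2 hd0
                    · exact hsa'
                    · exact hsa0
                    · positivity
                _ = |coef T (i + 1)| * K := by ring
            nlinarith [hdS, hd0]
        _ ≤ K ^ (n - (i + 1)) * K := by
            apply mul_le_mul_of_nonneg_right hA (by positivity)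
        _ = K ^ (n - i) := by rw [hnii, pow_succ]
    · -- affine representation
      intro x hx
      have hbox : ∀ j, 1 ≤ j → j ≤ i → |x j - y j| ≤ 3 / 2 * (2 * K * δ) ^ (n - (i + 1)) :=
        fun j h1 h2 => le_trans (hx j h1 h2) hεmono
      set sπ : ℝ := if i + 1 ∈ T' then π (i + 1) else -π (i + 1) with hsπ
      set V : ℝ := trunc ((∑ j ∈ Finset.Ico 1 (i + 1), a (i + 1) j * x j) + c (i + 1) + sπ)
        with hV
      set t : ℝ := ∑ j ∈ Finset.Ico 1 (i + 1), a (i + 1) j * (x j - y j) with htdef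
      have htsum : (∑ j ∈ Finset.Ico 1 (i + 1), a (i + 1) j * x j) + c (i + 1) + sπ
          = Iterm a c y (i + 1) + sπ + t := by
        rw [htdef, Iterm]
        rw [Finset.sum_congr rfl (fun j _ => mul_sub (a (i + 1) j) (x j) (y j)),
          Finset.sum_sub_distrib]
        ring
      have htb : |t| ≤ 3 * (K ^ 2 * δ * (2 * K * δ) ^ (n - (i + 1))) := by
        rw [htdef]
        calc |∑ j ∈ Finset.Ico 1 (i + 1), a (i + 1) j * (x j - y j)|
            ≤ ∑ j ∈ Finset.Ico 1 (i + 1), |a (i + 1) j * (x j - y j)| :=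
              Finset.abs_sum_le_sum_abs _ _
          _ ≤ ∑ j ∈ Finset.Ico 1 (i + 1),
                |a (i + 1) j| * (3 / 2 * (2 * K * δ) ^ (n - i)) := by
              apply Finset.sum_le_sum
              intro j hj
              rcases Finset.mem_Ico.mp hj with ⟨h1, h2⟩
              rw [abs_mul]
              exact mul_le_mul_of_nonneg_left (hx j h1 (by omega)) (abs_nonneg _)
          _ = (∑ j ∈ Finset.Ico 1 (i + 1), |a (i + 1) j|)
                * (3 / 2 * (2 * K * δ) ^ (n - i)) := by rw [← Finset.sum_mul]
          _ ≤ K * (3 / 2 * (2 * K * δ) ^ (n - i)) := by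
              apply mul_le_mul_of_nonneg_right _ (by positivity)
              have : (0:ℝ) ≤ |c (i + 1)| := abs_nonneg _
              linarith
          _ = 3 * (K ^ 2 * δ * (2 * K * δ) ^ (n - (i + 1))) := by
              rw [hεrel]; ring
      have hVval : V = σ * (Iterm a c y (i + 1) + sπ + t) + (if i + 1 ∈ T' then bp else bm)
          ∧ |V - y (i + 1)| ≤ 3 / 2 * (2 * K * δ) ^ (n - (i + 1)) := by
        rw [hV, htsum, hσ, hsπ]
        by_cases hmem : i + 1 ∈ T'
        · simp only [if_pos hmem]
          exact hsegp t htb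
        · simp only [if_neg hmem]
          have := hsegm t htb
          have heq : Iterm a c y (i + 1) - π (i + 1) + t
              = Iterm a c y (i + 1) + -π (i + 1) + t := by ring
          rw [heq] at this
          exact this
      -- the three-step rewriting of circVal
      have step1 : circVal a c (signedAbove i π T') i x n
          = circVal a c (signedAbove i π T') (i + 1) (Function.update x (i + 1)
              (trunc ((∑ j ∈ Finset.Ico 1 (i + 1), a (i + 1) j * x j) + c (i + 1)
                + signedAbove i π T' (i + 1)))) n := circVal_absorb _ _ _ _ _ _
      have hsgn : signedAbove i π T' (i + 1) = sπ := by
        rw [signedAbove_at, hsπ]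
      have step2 : circVal a c (signedAbove i π T') (i + 1) (Function.update x (i + 1) V) n
          = circVal a c (signedAbove (i + 1) π T) (i + 1) (Function.update x (i + 1) V) n :=
        circVal_congr_pi a c _ _ (i + 1) _ (fun m hm => signedAbove_high i π T' m hm) n
      have hboxup : ∀ j, 1 ≤ j → j ≤ i + 1 →
          |Function.update x (i + 1) V j - y j| ≤ 3 / 2 * (2 * K * δ) ^ (n - (i + 1)) := by
        intro j h1 h2
        rcases eq_or_ne j (i + 1) with h | h
        · subst h
          rw [Function.update_self]
          exact hVval.2
        · rw [Function.update_of_ne h]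
          exact hbox j h1 (by omega)
      have step3 := hB (Function.update x (i + 1) V) hboxup
      rw [step1, hsgn, ← hV, step2, step3]
      -- now compute the sum
      rw [hIcc1, Finset.sum_insert hnotmem1, Function.update_self]
      have hupd : ∀ j ∈ Finset.Icc 1 i, coef T j * Function.update x (i + 1) V j
          = coef T j * x j := by
        intro j hj
        have : j ≠ i + 1 := by have := Finset.mem_Icc.mp hj; omega
        rw [Function.update_of_ne this]
      rw [Finset.sum_congr rfl hupd]
      rw [hVval.1, ← htsum]
      have hRHS : ∑ j ∈ Finset.Icc 1 i,
          (coef T j + coef T (i + 1) * (σ * a (i + 1) j)) * x j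
          = (∑ j ∈ Finset.Icc 1 i, coef T j * x j)
            + coef T (i + 1) * σ * (∑ j ∈ Finset.Ico 1 (i + 1), a (i + 1) j * x j) := by
        rw [hIco, Finset.sum_congr rfl (fun j (_ : j ∈ Finset.Icc 1 i) => add_mul (coef T j)
            (coef T (i + 1) * (σ * a (i + 1) j)) (x j)), Finset.sum_add_distrib]
        congr 1
        rw [Finset.mul_sum]
        exact Finset.sum_congr rfl fun j _ => by ring
      rw [hRHS]
      ring
  · -- the derivative identity
    intro k hk1 hki
    rw [dpiy_step n K δ a c i k y zp zm hk1 hki hin, hdpi k hk1 (by omega)]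
    set μ : ℝ := lam (i + 1) * σp + (1 - lam (i + 1)) * σm with hμ
    have h2r : δ ^ (i + 1) * (2 * rterm K a c (i + 1) y zp zm * a (i + 1) k)
        = -(μ * dpiy n K δ a c (i + 1) (i + 1) y zp zm * a (i + 1) k) := by
      rw [hμ]
      linear_combination (-(a (i + 1) k)) * halg
    rw [h2r, hdpi (i + 1) (by omega) le_rfl]
    have hsplit : Finset.Icc (i + 1) n = insert (i + 1) (Finset.Icc (i + 2) n) := by
      ext m; simp [Finset.mem_Icc, Finset.mem_insert]; omega
    have hnm : (i + 1) ∉ Finset.Icc (i + 2) n := by simp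
    rw [hsplit, Finset.sum_powerset_insert hnm]
    have hkey : ∀ T ∈ (Finset.Icc (i + 2) n).powerset,
        ((∏ j ∈ insert (i + 1) (Finset.Icc (i + 2) n),
            (if j ∈ T then lam j else 1 - lam j)) *
          (coef (T.erase (i + 1)) k
            + coef (T.erase (i + 1)) (i + 1) * ((if i + 1 ∈ T then σp else σm) * a (i + 1) k)))
        + ((∏ j ∈ insert (i + 1) (Finset.Icc (i + 2) n),
            (if j ∈ insert (i + 1) T then lam j else 1 - lam j)) *
          (coef ((insert (i + 1) T).erase (i + 1)) k
            + coef ((insert (i + 1) T).erase (i + 1)) (i + 1) *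
                ((if i + 1 ∈ insert (i + 1) T then σp else σm) * a (i + 1) k)))
        = (∏ j ∈ Finset.Icc (i + 2) n, (if j ∈ T then lam j else 1 - lam j))
            * (coef T k + μ * coef T (i + 1) * a (i + 1) k) := by
      intro T hT
      have hTsub := Finset.mem_powerset.mp hT
      have hlnT : (i + 1) ∉ T := fun h => hnm (hTsub h)
      have he1 : T.erase (i + 1) = T := Finset.erase_eq_of_notMem hlnT
      have he2 : (insert (i + 1) T).erase (i + 1) = T := Finset.erase_insert hlnT
      have hp1 : (∏ j ∈ insert (i + 1) (Finset.Icc (i + 2) n),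
          (if j ∈ T then lam j else 1 - lam j))
          = (1 - lam (i + 1)) * ∏ j ∈ Finset.Icc (i + 2) n,
              (if j ∈ T then lam j else 1 - lam j) := by
        rw [Finset.prod_insert hnm, if_neg hlnT]
      have hp2 : (∏ j ∈ insert (i + 1) (Finset.Icc (i + 2) n),
          (if j ∈ insert (i + 1) T then lam j else 1 - lam j))
          = lam (i + 1) * ∏ j ∈ Finset.Icc (i + 2) n,
              (if j ∈ T then lam j else 1 - lam j) := by
        rw [Finset.prod_insert hnm, if_pos (Finset.mem_insert_self _ _)]
        congr 1
        apply Finset.prod_congr rfl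
        intro j hj
        have : j ≠ i + 1 := fun h => hnm (h ▸ hj)
        simp [Finset.mem_insert, this]
      rw [hp1, hp2, he1, he2, if_neg hlnT, if_pos (Finset.mem_insert_self _ _), hμ]
      ring
    rw [← Finset.sum_add_distrib, Finset.sum_congr rfl hkey]
    have hexp : ∀ T ∈ (Finset.Icc (i + 2) n).powerset,
        (∏ j ∈ Finset.Icc (i + 2) n, (if j ∈ T then lam j else 1 - lam j))
            * (coef T k + μ * coef T (i + 1) * a (i + 1) k)
        = (∏ j ∈ Finset.Icc (i + 2) n, (if j ∈ T then lam j else 1 - lam j)) * coef T k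
          + μ * a (i + 1) k * ((∏ j ∈ Finset.Icc (i + 2) n,
              (if j ∈ T then lam j else 1 - lam j)) * coef T (i + 1)) := by
      intro T _
      ring
    rw [Finset.sum_congr rfl hexp, Finset.sum_add_distrib, ← Finset.mul_sum]
    ring

lemma wsum_eq_one (lam : ℕ → ℝ) (s : Finset ℕ) :
    ∑ T ∈ s.powerset, ∏ j ∈ s, (if j ∈ T then lam j else 1 - lam j) = 1 := by
  induction s using Finset.induction_on with
  | empty => simp
  | @insert a s ha ih =>
    rw [Finset.sum_powerset_insert ha]
    have h1 : ∀ T ∈ s.powerset,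
        (∏ j ∈ insert a s, (if j ∈ T then lam j else 1 - lam j))
          + (∏ j ∈ insert a s, (if j ∈ insert a T then lam j else 1 - lam j))
        = ∏ j ∈ s, (if j ∈ T then lam j else 1 - lam j) := by
      intro T hT
      have hanT : a ∉ T := fun h => ha (Finset.mem_powerset.mp hT h)
      rw [Finset.prod_insert ha, Finset.prod_insert ha, if_neg hanT,
        if_pos (Finset.mem_insert_self _ _)]
      have : (∏ j ∈ s, (if j ∈ insert a T then lam j else 1 - lam j))
          = ∏ j ∈ s, (if j ∈ T then lam j else 1 - lam j) := by
        apply Finset.prod_congr rfl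
        intro j hj
        have : j ≠ a := fun h => ha (h ▸ hj)
        simp [Finset.mem_insert, this]
      rw [this]
      ring
    rw [← Finset.sum_add_distrib, Finset.sum_congr rfl h1, ih]

lemma wprod_nonneg (lam : ℕ → ℝ) (s T : Finset ℕ) (hlam : ∀ j ∈ s, 0 ≤ lam j ∧ lam j ≤ 1) :
    0 ≤ ∏ j ∈ s, (if j ∈ T then lam j else 1 - lam j) := by
  apply Finset.prod_nonneg
  intro j hj
  have := hlam j hj
  split_ifs <;> linarith [this.1, this.2]

/-- The linear map that is the derivative of an affine function. -/
def linMap (i : ℕ) (g : ℕ → ℝ) : (Fin i → ℝ) →L[ℝ] ℝ :=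
  ∑ j : Fin i, g (j.1 + 1) • ContinuousLinearMap.proj j

lemma linMap_apply (i : ℕ) (g : ℕ → ℝ) (w : Fin i → ℝ) :
    linMap i g w = ∑ j : Fin i, g (j.1 + 1) * w j := by
  rw [linMap, ContinuousLinearMap.sum_apply]
  apply Finset.sum_congr rfl
  intro j _
  simp [ContinuousLinearMap.proj_apply]

lemma linMap_single (i : ℕ) (g : ℕ → ℝ) (j₀ : Fin i) :
    linMap i g (Pi.single j₀ 1) = g (j₀.1 + 1) := by
  rw [linMap_apply]
  rw [Finset.sum_eq_single j₀]
  · simp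
  · intro j _ hj
    simp [Pi.single_apply, hj]
  · intro h; exact absurd (Finset.mem_univ j₀) h

lemma affine_fderiv (i : ℕ) (g : ℕ → ℝ) (b : ℝ) (f : (Fin i → ℝ) → ℝ) (v : Fin i → ℝ)
    (ρ : ℝ) (hρ : 0 < ρ)
    (hf : ∀ w : Fin i → ℝ, dist w v < ρ → f w = (∑ j : Fin i, g (j.1 + 1) * w j) + b) :
    DifferentiableAt ℝ f v ∧ fderiv ℝ f v = linMap i g := by
  have hA : HasFDerivAt (fun w : Fin i → ℝ => (∑ j : Fin i, g (j.1 + 1) * w j) + b)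
      (linMap i g) v := by
    rw [linMap]
    apply HasFDerivAt.add_const
    apply HasFDerivAt.fun_sum
    intro j _
    have hp : HasFDerivAt (fun w : Fin i → ℝ => w j)
        (ContinuousLinearMap.proj j (R := ℝ) (φ := fun _ : Fin i => ℝ)) v :=
      (ContinuousLinearMap.proj j (R := ℝ) (φ := fun _ : Fin i => ℝ)).hasFDerivAt
    exact hp.const_mul _
  have hev : f =ᶠ[nhds v] fun w => (∑ j : Fin i, g (j.1 + 1) * w j) + b := by
    filter_upwards [Metric.ball_mem_nhds v hρ] with w hw
    exact hf w (Metric.mem_ball.mp hw)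
  constructor
  · exact (Filter.EventuallyEq.differentiableAt_iff hev).mpr hA.differentiableAt
  · rw [Filter.EventuallyEq.fderiv_eq hev, hA.fderiv]

lemma sum_Icc_to_fin (i : ℕ) (F : ℕ → ℝ) :
    ∑ j ∈ Finset.Icc 1 i, F j = ∑ j : Fin i, F (j.1 + 1) := by
  rw [← Finset.Ico_add_one_right_eq_Icc, Finset.sum_Ico_eq_sum_range]
  have h : i + 1 - 1 = i := by omega
  rw [h, ← Finset.sum_range fun j => F (j + 1)]
  apply Finset.sum_congr rfl
  intro j _
  rw [add_comm]

lemma sum_Icc_fin_reindex (i : ℕ) (g : ℕ → ℝ) (w : Fin i → ℝ) :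
    (∑ j ∈ Finset.Icc 1 i, g j * (if h : 1 ≤ j ∧ j ≤ i then w ⟨j - 1, by omega⟩ else 0))
      = ∑ j : Fin i, g (j.1 + 1) * w j := by
  rw [sum_Icc_to_fin i (fun j => g j * (if h : 1 ≤ j ∧ j ≤ i then w ⟨j - 1, by omega⟩ else 0))]
  apply Finset.sum_congr rfl
  intro j _
  have hcond : 1 ≤ j.1 + 1 ∧ j.1 + 1 ≤ i := ⟨by omega, by omega⟩
  rw [dif_pos hcond]
  congr 1

/-- Inductive backpropagation claim. -/
theorem backpropagation_induction (n : ℕ) (hn : 3 ≤ n) (a : ℕ → ℕ → ℝ) (c : ℕ → ℝ)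
    (K : ℝ) (hK1 : 1 ≤ K)
    (hK : ∀ i, 3 ≤ i → i ≤ n → (∑ j ∈ Finset.Ico 1 i, |a i j|) + |c i| ≤ K)
    (δ : ℝ) (hδ : δ ∈ Set.Ioo (0 : ℝ) (1 / (16 * K ^ 2)))
    (y zp zm : ℕ → ℝ) (hkkt : IsKKT n K δ a c y zp zm) :
    ∃ π : ℕ → ℝ,
      (∀ i, 3 ≤ i → i ≤ n → |π i| ≤ 4 * K * (2 * K * δ) ^ (n + 1 - i)) ∧
      ∃ lam : ℕ → ℝ, (∀ i, 3 ≤ i → i ≤ n → lam i ∈ Set.Icc (0 : ℝ) 1) ∧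
        ∀ i, 2 ≤ i → i ≤ n →
          (∀ T ∈ (Finset.Icc 3 n).powerset,
            ∀ v : Fin i → ℝ, (∀ j : Fin i, |v j - y (j.val + 1)| ≤ (2 * K * δ) ^ (n - i)) →
              DifferentiableAt ℝ (progFunFrom a c (signed π T) i n) v ∧
              fderiv ℝ (progFunFrom a c (signed π T) i n) v
                = fderiv ℝ (progFunFrom a c (signed π T) i n)
                    (fun j : Fin i => y (j.val + 1))) ∧
          (∀ k, ∀ _hk1 : 1 ≤ k, ∀ hk2 : k ≤ i,
            dpiy n K δ a c i k y zp zm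
              = δ ^ (n + 1) * ∑ T ∈ (Finset.Icc (i + 1) n).powerset,
                  (∏ j ∈ Finset.Icc (i + 1) n, if j ∈ T then lam j else 1 - lam j) *
                    fderiv ℝ (progFunFrom a c (signedAbove i π T) i n)
                      (fun j : Fin i => y (j.val + 1))
                      (Pi.single (⟨k - 1, by omega⟩ : Fin i) 1)) := by
  obtain ⟨hδ0, hδ1⟩ := hδ
  have hKpos : 0 < K := lt_of_lt_of_le zero_lt_one hK1
  have h2Kδ0 : (0:ℝ) < 2 * K * δ := by positivity
  have h2Kδ : 2 * K * δ ≤ 1 := by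
    have h16 : (0:ℝ) < 16 * K ^ 2 := by positivity
    have := (lt_div_iff₀ h16).mp hδ1
    nlinarith
  have hex := fun l => gate_exists n a c K hK1 hK δ hδ0 hδ1 y zp zm hkkt l
  choose π lam hπb hlam0 hlam1 hgate using hex
  -- main induction
  have main : ∀ d, ∀ i, 2 ≤ i → i ≤ n → n - i ≤ d →
      ∃ (coef : Finset ℕ → ℕ → ℝ) (ofs : Finset ℕ → ℝ),
        (∀ T ∈ (Finset.Icc (i + 1) n).powerset,
          ((∑ j ∈ Finset.Icc 1 i, |coef T j|) ≤ K ^ (n - i) ∧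
           ∀ x : ℕ → ℝ,
             (∀ j, 1 ≤ j → j ≤ i → |x j - y j| ≤ 3 / 2 * (2 * K * δ) ^ (n - i)) →
             circVal a c (signedAbove i π T) i x n
               = (∑ j ∈ Finset.Icc 1 i, coef T j * x j) + ofs T))
        ∧ ∀ k, 1 ≤ k → k ≤ i → dpiy n K δ a c i k y zp zm
            = δ ^ (n + 1) * ∑ T ∈ (Finset.Icc (i + 1) n).powerset,
                (∏ j ∈ Finset.Icc (i + 1) n, (if j ∈ T then lam j else 1 - lam j))
                  * coef T k := by
    intro d
    induction d with
    | zero =>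
      intro i h2 hn' hd
      have hieq : n = i := by omega
      subst hieq
      obtain ⟨coef, ofs, h1, h2'⟩ := base_main n hn a c K δ y zp zm π lam
      exact ⟨coef, ofs, fun T hT => (h1 T hT), h2'⟩
    | succ d ih =>
      intro i h2 hn' hd
      by_cases hieq : n = i
      · subst hieq
        obtain ⟨coef, ofs, h1, h2'⟩ := base_main n hn a c K δ y zp zm π lam
        exact ⟨coef, ofs, fun T hT => (h1 T hT), h2'⟩
      · have hin : i + 1 ≤ n := by omega
        obtain ⟨coef, ofs, hco, hdpi⟩ := ih (i + 1) (by omega) hin (by omega)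
        have hco' := hco
        have hdpi' := hdpi
        -- the bound on |g (i+1)|
        have hgb : |dpiy n K δ a c (i + 1) (i + 1) y zp zm|
            ≤ δ ^ (n + 1) * K ^ (n - (i + 1)) := by
          rw [hdpi' (i + 1) (by omega) le_rfl, abs_mul,
            abs_of_nonneg (by positivity : (0:ℝ) ≤ δ ^ (n + 1))]
          apply mul_le_mul_of_nonneg_left _ (by positivity)
          have hterm : ∀ T ∈ (Finset.Icc (i + 1 + 1) n).powerset,
              |(∏ j ∈ Finset.Icc (i + 1 + 1) n, (if j ∈ T then lam j else 1 - lam j))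
                  * coef T (i + 1)|
              ≤ (∏ j ∈ Finset.Icc (i + 1 + 1) n, (if j ∈ T then lam j else 1 - lam j))
                  * K ^ (n - (i + 1)) := by
            intro T hT
            have hw0 : 0 ≤ ∏ j ∈ Finset.Icc (i + 1 + 1) n, (if j ∈ T then lam j else 1 - lam j) :=
              wprod_nonneg lam _ _ (fun j _ => ⟨hlam0 j, hlam1 j⟩)
            rw [abs_mul, abs_of_nonneg hw0]
            apply mul_le_mul_of_nonneg_left _ hw0
            calc |coef T (i + 1)| ≤ ∑ j ∈ Finset.Icc 1 (i + 1), |coef T j| :=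
                  Finset.single_le_sum (fun j _ => abs_nonneg (coef T j))
                    (Finset.mem_Icc.mpr ⟨by omega, le_rfl⟩)
              _ ≤ K ^ (n - (i + 1)) := (hco' T hT).1
          calc |∑ T ∈ (Finset.Icc (i + 1 + 1) n).powerset,
                (∏ j ∈ Finset.Icc (i + 1 + 1) n, (if j ∈ T then lam j else 1 - lam j))
                  * coef T (i + 1)|
              ≤ ∑ T ∈ (Finset.Icc (i + 1 + 1) n).powerset,
                |(∏ j ∈ Finset.Icc (i + 1 + 1) n, (if j ∈ T then lam j else 1 - lam j))
                  * coef T (i + 1)| := Finset.abs_sum_le_sum_abs _ _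
            _ ≤ ∑ T ∈ (Finset.Icc (i + 1 + 1) n).powerset,
                (∏ j ∈ Finset.Icc (i + 1 + 1) n, (if j ∈ T then lam j else 1 - lam j))
                  * K ^ (n - (i + 1)) := Finset.sum_le_sum hterm
            _ = (∑ T ∈ (Finset.Icc (i + 1 + 1) n).powerset,
                ∏ j ∈ Finset.Icc (i + 1 + 1) n, (if j ∈ T then lam j else 1 - lam j))
                  * K ^ (n - (i + 1)) := by rw [Finset.sum_mul]
            _ = K ^ (n - (i + 1)) := by rw [wsum_eq_one]; ring
        obtain ⟨σp, σm, bp, bm, hsp, hsm, hsegp, hsegm, halg⟩ :=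
          hgate (i + 1) (by omega) hin hgb
        exact step_main n i h2 hin a c K δ hK1 hδ0 h2Kδ (hK (i + 1) (by omega) hin)
          y zp zm π lam (hlam0 (i + 1)) (hlam1 (i + 1)) σp σm bp bm hsp hsm hsegp hsegm halg
          coef ofs hco' hdpi'
  -- final assembly
  refine ⟨π, ?_, lam, ?_, ?_⟩
  · intro l h3 hln
    calc |π l| ≤ 8 * K ^ 2 * δ * (2 * K * δ) ^ (n - l) := hπb l
      _ = 4 * K * (2 * K * δ) ^ (n + 1 - l) := by
          have h : n + 1 - l = (n - l) + 1 := by omega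
          rw [h, pow_succ]; ring
  · intro l _ _
    exact Set.mem_Icc.mpr ⟨hlam0 l, hlam1 l⟩
  · intro i h2 hin
    obtain ⟨coef, ofs, hco, hdpi⟩ := main (n - i) i h2 hin le_rfl
    have hε0 : (0:ℝ) < (2 * K * δ) ^ (n - i) := by positivity
    -- the key local-affineness consequence
    have key : ∀ T₀ ∈ (Finset.Icc (i + 1) n).powerset, ∀ π' : ℕ → ℝ,
        (∀ m, i < m → π' m = signedAbove i π T₀ m) →
        ∀ v : Fin i → ℝ, (∀ j : Fin i, |v j - y (j.1 + 1)| ≤ (2 * K * δ) ^ (n - i)) →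
        DifferentiableAt ℝ (progFunFrom a c π' i n) v ∧
        fderiv ℝ (progFunFrom a c π' i n) v = linMap i (coef T₀) := by
      intro T₀ hT₀ π' hπ' v hv
      apply affine_fderiv i (coef T₀) (ofs T₀) _ v ((2 * K * δ) ^ (n - i) / 2) (by positivity)
      intro w hw
      show circVal a c π' i _ n = _
      rw [circVal_congr_pi a c π' (signedAbove i π T₀) i _ hπ' n]
      have hXbox : ∀ j, 1 ≤ j → j ≤ i →
          |(fun m => if h : 1 ≤ m ∧ m ≤ i then w ⟨m - 1, by omega⟩ else 0) j - y j|
            ≤ 3 / 2 * (2 * K * δ) ^ (n - i) := by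
        intro j h1 h2'
        simp only
        rw [dif_pos ⟨h1, h2'⟩]
        set q : Fin i := ⟨j - 1, by omega⟩ with hq
        have hcoord : |w q - v q| ≤ dist w v := by
          rw [← Real.dist_eq]
          exact dist_le_pi_dist w v q
        have hvq := hv q
        have hq1 : q.1 + 1 = j := by rw [hq]; simp; omega
        rw [hq1] at hvq
        calc |w q - y j| ≤ |w q - v q| + |v q - y j| := abs_sub_le _ _ _
          _ ≤ 3 / 2 * (2 * K * δ) ^ (n - i) := by
              have := lt_of_le_of_lt hcoord hw
              linarith [hvq]
      rw [(hco T₀ hT₀).2 _ hXbox]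
      rw [sum_Icc_fin_reindex i (coef T₀) w]
    have hyv : ∀ j : Fin i, |(fun j : Fin i => y (j.1 + 1)) j - y (j.1 + 1)|
        ≤ (2 * K * δ) ^ (n - i) := by
      intro j
      simp only [sub_self, abs_zero]
      positivity
    constructor
    · -- part (1)
      intro T hT v hv
      set T₀ : Finset ℕ := T ∩ Finset.Icc (i + 1) n with hT₀def
      have hT₀ : T₀ ∈ (Finset.Icc (i + 1) n).powerset :=
        Finset.mem_powerset.mpr (Finset.inter_subset_right)
      have hagree : ∀ m, i < m → signed π T m = signedAbove i π T₀ m := by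
        intro m hm
        rw [signed, signedAbove, hT₀def]
        have h1 : ¬ m ≤ i := by omega
        by_cases hmem : m ∈ T
        · have hmn : m ≤ n := (Finset.mem_Icc.mp (Finset.mem_powerset.mp hT hmem)).2
          have : m ∈ T ∩ Finset.Icc (i + 1) n :=
            Finset.mem_inter.mpr ⟨hmem, Finset.mem_Icc.mpr ⟨by omega, hmn⟩⟩
          simp [hmem, this, h1]
        · have : m ∉ T ∩ Finset.Icc (i + 1) n := fun h => hmem (Finset.mem_inter.mp h).1
          simp [hmem, this, h1]
      obtain ⟨hd1, hf1⟩ := key T₀ hT₀ (signed π T) hagree v hv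
      obtain ⟨_, hf2⟩ := key T₀ hT₀ (signed π T) hagree _ hyv
      exact ⟨hd1, by rw [hf1, hf2]⟩
    · -- part (2)
      intro k hk1 hk2
      rw [hdpi k hk1 hk2]
      congr 1
      apply Finset.sum_congr rfl
      intro T hT
      congr 1
      obtain ⟨_, hf⟩ := key T hT (signedAbove i π T) (fun m _ => rfl) _ hyv
      rw [hf, linMap_single]
      congr 1
      simp
      omega
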